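/- arXiv:1903.11572 — 2 statements merged into one kernel-verified Lean document; each statement's English description precedes it below -/
import Mathlib

section
/- Let τ be a bounded function on [0,∞)² that is continuous at (0,0) with τ(0,0) = 1 and satisfies Assumption (A). Then for every bounded operator A on ℓ²(ℤ₊), τ_N ⋆ A converges to A in the strong operator topology as N → ∞; if moreover A is compact, then τ_N ⋆ A converges to A in operator norm. -/
open Complex Filter Topology MeasureTheory

noncomputable section

/-- ℓ²(ℤ₊) with complex scalars. -/
abbrev Hl2 : Type := lp (fun _ : ℕ => ℂ) 2
/-- Bounded operators on ℓ²(ℤ₊). -/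
abbrev OpH : Type := Hl2 →L[ℂ] Hl2
/-- ℓ²(ℤ) with complex scalars. -/
abbrev Hl2Z : Type := lp (fun _ : ℤ => ℂ) 2
/-- Bounded operators on ℓ²(ℤ). -/
abbrev OpZ : Type := Hl2Z →L[ℂ] Hl2Z

/-- Matrix entry `A_{j,k} = ⟨e_j, A e_k⟩` of an operator on ℓ²(ℤ₊). -/
def entry (A : OpH) (j k : ℕ) : ℂ :=
  (inner ℂ (lp.single 2 j (1 : ℂ)) (A (lp.single 2 k (1 : ℂ))) : ℂ)

/-- Matrix entry of an operator on ℓ²(ℤ). -/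
def entryZ (A : OpZ) (m n : ℤ) : ℂ :=
  (inner ℂ (lp.single 2 m (1 : ℂ)) (A (lp.single 2 n (1 : ℂ))) : ℂ)

/-- `approxNum A n` is the `n`-th approximation number of `A`, i.e. the distance of `A`
to operators of rank at most `n`; for a compact operator it is the singular value
`s_{n+1}(A)` (so `approxNum A 0 = s₁(A) = ‖A‖`). -/
def approxNum {E : Type*} [NormedAddCommGroup E] [NormedSpace ℂ E]
    (A : E →L[ℂ] E) (n : ℕ) : ℝ :=
  ⨅ F : {F : E →L[ℂ] E // Module.finrank ℂ (LinearMap.range F.toLinearMap) ≤ n},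
    ‖A - F.1‖

/-- Singular value counting function `n(t; A) = #{n : s_n(A) > t}`. -/
def countSV {E : Type*} [NormedAddCommGroup E] [NormedSpace ℂ E]
    (t : ℝ) (A : E →L[ℂ] E) : ℕ :=
  Set.ncard {n : ℕ | t < approxNum A n}

/-- Eigenvalue counting function `n₊(t;A)`: the maximal dimension of a subspace on which
the quadratic form of `A` is `> t‖x‖²` (Glazman's lemma). -/
def countPos {E : Type*} [NormedAddCommGroup E] [InnerProductSpace ℂ E]
    (t : ℝ) (A : E →L[ℂ] E) : ℕ :=
  ⨆ V : {V : Submodule ℂ E // ∀ x ∈ V, x ≠ 0 → t * ‖x‖ ^ 2 < ((inner ℂ x (A x) : ℂ)).re},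
    Module.finrank ℂ V.1

/-- Eigenvalue counting function `n₋(t;A) = n₊(t;-A)`. -/
def countNeg {E : Type*} [NormedAddCommGroup E] [InnerProductSpace ℂ E]
    (t : ℝ) (A : E →L[ℂ] E) : ℕ :=
  countPos t (-A)

/-- Membership in the Schatten class 𝔖_p: the p-th powers of singular values are summable. -/
def MemSp {E : Type*} [NormedAddCommGroup E] [NormedSpace ℂ E]
    (p : ℝ) (A : E →L[ℂ] E) : Prop :=
  Summable fun n => approxNum A n ^ p

/-- The Schatten norm `‖A‖_{𝔖_p} = (Σ s_n(A)^p)^{1/p}`. -/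
def schattenNorm {E : Type*} [NormedAddCommGroup E] [NormedSpace ℂ E]
    (p : ℝ) (A : E →L[ℂ] E) : ℝ :=
  (∑' n, approxNum A n ^ p) ^ (1 / p)

/-- Widom's density function `c(t) = π⁻² log((1+√(1-t²))/t)` on `(0,1]`, zero elsewhere. -/
def specDens (t : ℝ) : ℝ :=
  if 0 < t ∧ t ≤ 1 then (Real.pi ^ 2)⁻¹ * Real.log ((1 + Real.sqrt (1 - t ^ 2)) / t) else 0

/-- Fourier coefficient `ω̂(n)` of a symbol on the unit circle. -/
def fCoeff (ω : ℂ → ℂ) (n : ℤ) : ℂ :=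
  (∫ θ in (0:ℝ)..(2 * Real.pi),
      ω (Complex.exp ((θ : ℂ) * Complex.I)) * Complex.exp (-(n : ℂ) * (θ : ℂ) * Complex.I)) /
    ((2 * Real.pi : ℝ) : ℂ)

/-- `A` is the Hankel matrix `Γ(ω̂)` of the symbol `ω`: `A_{j,k} = ω̂(j+k)`. -/
def IsHankelOf (ω : ℂ → ℂ) (A : OpH) : Prop :=
  ∀ j k : ℕ, entry A j k = fCoeff ω ((j : ℤ) + (k : ℤ))

/-- `ω` is (essentially) bounded on the unit circle. -/
def BddSymbol (ω : ℂ → ℂ) : Prop :=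
  ∃ M : ℝ, ∀ z : ℂ, ‖z‖ = 1 → ‖ω z‖ ≤ M

/-- The rescaled multiplier `τ_N(x,y) = τ(x/N, y/N)`. -/
def scaleT (τ : ℝ → ℝ → ℂ) (N : ℕ) : ℝ → ℝ → ℂ := fun x y => τ (x / N) (y / N)

/-- `B` is the Schur–Hadamard product `σ ⋆ A`: entrywise `B_{j,k} = σ(j,k) A_{j,k}`. -/
def IsSchurMul (σ : ℝ → ℝ → ℂ) (A B : OpH) : Prop :=
  ∀ j k : ℕ, entry B j k = σ j k * entry A j k

/-- Assumption (A): `τ` induces a uniformly bounded Schur–Hadamard multiplier,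
`sup_N ‖τ_N‖_𝔐 < ∞`. -/
def AssumptionA (τ : ℝ → ℝ → ℂ) : Prop :=
  ∃ C : ℝ, ∀ N : ℕ, 1 ≤ N → ∀ A : OpH, ∃ B : OpH,
    IsSchurMul (scaleT τ N) A B ∧ ‖B‖ ≤ C * ‖A‖

/-- Assumption (B): `τ(0,0) = 1` and `|τ(x,y) - 1| ≤ C |log(x+y)|^{-β}` near the origin,
for some `β > 1/2`. -/
def AssumptionB (τ : ℝ → ℝ → ℂ) : Prop :=
  τ 0 0 = 1 ∧
    ∃ ε > (0 : ℝ), ∃ β > (1 / 2 : ℝ), ∃ C > (0 : ℝ), ∀ x y : ℝ,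
      0 ≤ x → x ≤ ε → 0 ≤ y → y ≤ ε →
        ‖τ x y - 1‖ ≤ C * |Real.log (x + y)| ^ (-β)

/-- Assumption (C): `|τ(x,y)| ≤ C log(x+y+2)^{-α}` for some `α > 1/2`. -/
def AssumptionC (τ : ℝ → ℝ → ℂ) : Prop :=
  ∃ α > (1 / 2 : ℝ), ∃ C > (0 : ℝ), ∀ x y : ℝ,
    0 ≤ x → 0 ≤ y → ‖τ x y‖ ≤ C * Real.log (x + y + 2) ^ (-α)

/-- `τ(x,y) = conj (τ(y,x))`. -/
def HermitianMult (τ : ℝ → ℝ → ℂ) : Prop :=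
  ∀ x y : ℝ, 0 ≤ x → 0 ≤ y → τ x y = starRingEnd ℂ (τ y x)

/-- The symmetry condition `ω(v) = conj (ω(v̄))` making the Hankel matrix self-adjoint. -/
def SymmetricSymbol (ω : ℂ → ℂ) : Prop :=
  ∀ v : ℂ, ‖v‖ = 1 → ω v = starRingEnd ℂ (ω (starRingEnd ℂ v))

/-- Self-adjointness of a bounded operator, via the inner product. -/
def SelfAdjointOp (A : OpH) : Prop :=
  ∀ x y : Hl2, (inner ℂ (A x) y : ℂ) = (inner ℂ x (A y) : ℂ)

/-- `ω` has one-sided limits `ωp z = ω(z+)`, `ωm z = ω(z-)` at every point of the circle;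
this is piecewise continuity of `ω`. -/
def OneSidedLimits (ω ωp ωm : ℂ → ℂ) : Prop :=
  ∀ z : ℂ, ‖z‖ = 1 →
    Tendsto (fun ε : ℝ => ω (z * Complex.exp ((ε : ℂ) * Complex.I))) (𝓝[>] 0) (𝓝 (ωp z)) ∧
    Tendsto (fun ε : ℝ => ω (z * Complex.exp (-(ε : ℂ) * Complex.I))) (𝓝[>] 0) (𝓝 (ωm z))

/-- Half-height of the jump, `κ_z(ω) = (ω(z+) - ω(z-))/2`. -/
def jumpHeight (ωp ωm : ℂ → ℂ) (z : ℂ) : ℂ := (ωp z - ωm z) / 2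

/-- The class `ℬ₀` of operators with entries `O(1/(j+k+1))`. -/
def MemB0 (A : OpH) : Prop :=
  ∃ M : ℝ, ∀ j k : ℕ, ((j : ℝ) + k + 1) * ‖entry A j k‖ ≤ M

/-- Upper logarithmic spectral density of the sequence of truncations `B N`. -/
def upperLD (t : ℝ) (B : ℕ → OpH) : ℝ :=
  limsup (fun N : ℕ => (countSV t (B N) : ℝ) / Real.log N) atTop

/-- Lower logarithmic spectral density. -/
def lowerLD (t : ℝ) (B : ℕ → OpH) : ℝ :=
  liminf (fun N : ℕ => (countSV t (B N) : ℝ) / Real.log N) atTop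

/-- Upper positive logarithmic spectral density. -/
def upperLDpos (t : ℝ) (B : ℕ → OpH) : ℝ :=
  limsup (fun N : ℕ => (countPos t (B N) : ℝ) / Real.log N) atTop

/-- Lower positive logarithmic spectral density. -/
def lowerLDpos (t : ℝ) (B : ℕ → OpH) : ℝ :=
  liminf (fun N : ℕ => (countPos t (B N) : ℝ) / Real.log N) atTop

/-- Upper negative logarithmic spectral density. -/
def upperLDneg (t : ℝ) (B : ℕ → OpH) : ℝ :=
  limsup (fun N : ℕ => (countNeg t (B N) : ℝ) / Real.log N) atTop

/-- Lower negative logarithmic spectral density. -/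
def lowerLDneg (t : ℝ) (B : ℕ → OpH) : ℝ :=
  liminf (fun N : ℕ => (countNeg t (B N) : ℝ) / Real.log N) atTop

/-- `ω` is C^∞ on the circle away from the closed set `M` (so `singsupp ω ⊆ M`). -/
def SmoothOff (ω : ℂ → ℂ) (M : Set ℂ) : Prop :=
  ContDiffOn ℝ (⊤ : ℕ∞) (fun θ : ℝ => ω (Complex.exp ((θ : ℂ) * Complex.I)))
    {θ : ℝ | Complex.exp ((θ : ℂ) * Complex.I) ∉ M}

/-- Fourier coefficients of the function `sign (Im v)` on the circle. -/
def sgnCoeff (k : ℤ) : ℂ :=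
  (∫ θ in (0:ℝ)..(2 * Real.pi),
      ((Real.sign (Real.sin θ) : ℝ) : ℂ) * Complex.exp (-(k : ℂ) * (θ : ℂ) * Complex.I)) /
    ((2 * Real.pi : ℝ) : ℂ)

/-- The argument of `v`, normalized to `[0, 2π)`. -/
def thetaOf (v : ℂ) : ℝ :=
  if 0 ≤ Complex.arg v then Complex.arg v else Complex.arg v + 2 * Real.pi

/-- The model symbol `γ(e^{iθ}) = i π⁻¹ e^{-iθ} (π - θ)`, `θ ∈ [0, 2π)`. -/
def gammaSym (v : ℂ) : ℂ :=
  Complex.I * ((Real.pi : ℂ))⁻¹ * starRingEnd ℂ v * ((Real.pi : ℂ) - (thetaOf v : ℂ))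

/-- Trace of an operator on ℓ²(ℤ₊) as the sum of diagonal entries. -/
def opTrace (X : OpH) : ℂ := ∑' j : ℕ, entry X j j

namespace STC

def eV (k : ℕ) : Hl2 := lp.single 2 k (1 : ℂ)

lemma coord_eq_inner (v : Hl2) (j : ℕ) : (inner ℂ (eV j) v : ℂ) = v j := by
  rw [eV, lp.inner_single_left]
  simp [RCLike.inner_apply]

lemma entry_eq (A : OpH) (j k : ℕ) : entry A j k = (A (eV k) : ∀ _ : ℕ, ℂ) j :=
  coord_eq_inner (A (eV k)) j

lemma norm_eV (k : ℕ) : ‖eV k‖ = 1 := by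
  have := lp.norm_single (E := fun _ : ℕ => ℂ) (p := 2) (by norm_num) k (1:ℂ)
  simpa [eV] using this

lemma abs_entry_le (A : OpH) (j k : ℕ) : ‖entry A j k‖ ≤ ‖A‖ := by
  have h1 : ‖entry A j k‖ ≤ ‖eV j‖ * ‖A (eV k)‖ := by
    simpa [entry, eV] using norm_inner_le_norm (𝕜 := ℂ) (eV j) (A (eV k))
  have h2 : ‖A (eV k)‖ ≤ ‖A‖ * ‖eV k‖ := A.le_opNorm _
  rw [norm_eV, one_mul] at h1
  rw [norm_eV, mul_one] at h2
  exact h1.trans h2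

/-- operators with equal entries are equal -/
lemma ext_entries {A B : OpH} (h : ∀ j k, entry A j k = entry B j k) : A = B := by
  have hv : ∀ k, A (eV k) = B (eV k) := by
    intro k
    apply lp.ext
    funext j
    have := h j k
    rwa [entry_eq, entry_eq] at this
  apply ContinuousLinearMap.ext
  intro x
  have hx : HasSum (fun i : ℕ => lp.single 2 i (x i : ℂ)) x :=
    lp.hasSum_single (by norm_num) x
  have hAx : HasSum (fun i : ℕ => A (lp.single 2 i (x i : ℂ))) (A x) := hx.mapL A
  have hBx : HasSum (fun i : ℕ => B (lp.single 2 i (x i : ℂ))) (B x) := hx.mapL B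
  have : (fun i : ℕ => A (lp.single 2 i (x i : ℂ))) = fun i => B (lp.single 2 i (x i : ℂ)) := by
    funext i
    have : lp.single 2 i (x i : ℂ) = (x i) • eV i := by
      rw [eV, ← lp.single_smul]; norm_num
    rw [this, A.map_smul, B.map_smul, hv]
  rw [this] at hAx
  exact hAx.unique hBx

lemma toReal_two : (2 : ENNReal).toReal = 2 := by norm_num

lemma norm_sq_eq (v : Hl2) : ‖v‖ ^ 2 = ∑' j, ‖(v : ∀ _ : ℕ, ℂ) j‖ ^ 2 := by
  have h := lp.norm_rpow_eq_tsum (p := 2) (E := fun _ : ℕ => ℂ) (by norm_num) v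
  rw [toReal_two] at h
  have e : ∀ x : ℝ, x ^ (2 : ℝ) = x ^ (2 : ℕ) := fun x => by
    rw [show (2:ℝ) = ((2:ℕ):ℝ) by norm_num, Real.rpow_natCast]
  rw [e] at h
  simp only [e] at h
  exact h

lemma summable_coord_sq (v : Hl2) : Summable (fun j => ‖(v : ∀ _ : ℕ, ℂ) j‖ ^ 2) := by
  have h := (lp.memℓp v).summable (p := 2) (by rw [toReal_two]; norm_num)
  have e : ∀ x : ℝ, x ^ ((2:ENNReal).toReal) = x ^ (2 : ℕ) := fun x => by
    rw [toReal_two, show (2:ℝ) = ((2:ℕ):ℝ) by norm_num, Real.rpow_natCast]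
  simpa only [e] using h

/-- the tail function -/
def qf (M : ℕ) (x : Hl2) : ∀ _ : ℕ, ℂ := fun j => if M ≤ j then x j else 0

lemma memℓp_qf (M : ℕ) (x : Hl2) : Memℓp (qf M x) 2 := by
  apply memℓp_gen
  have e : ∀ x : ℝ, x ^ ((2:ENNReal).toReal) = x ^ (2 : ℕ) := fun x => by
    rw [toReal_two, show (2:ℝ) = ((2:ℕ):ℝ) by norm_num, Real.rpow_natCast]
  simp only [e]
  apply Summable.of_nonneg_of_le (fun j => by positivity) _ (summable_coord_sq x)
  intro j
  rcases le_or_gt M j with h | h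
  · simp [qf, h]
  · simp [qf, not_le.2 h]

def QopL (M : ℕ) : Hl2 →ₗ[ℂ] Hl2 where
  toFun x := ⟨qf M x, memℓp_qf M x⟩
  map_add' x y := by
    apply lp.ext; funext j
    simp only [lp.coeFn_add, Pi.add_apply]
    by_cases h : M ≤ j <;> simp [qf, h]
  map_smul' c x := by
    apply lp.ext; funext j
    simp only [lp.coeFn_smul, Pi.smul_apply, RingHom.id_apply]
    by_cases h : M ≤ j <;> simp [qf, h]

lemma QopL_coord (M : ℕ) (x : Hl2) (j : ℕ) :
    (QopL M x : ∀ _ : ℕ, ℂ) j = if M ≤ j then (x : ∀ _ : ℕ, ℂ) j else 0 := rfl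

lemma QopL_norm_le (M : ℕ) (x : Hl2) : ‖QopL M x‖ ≤ ‖x‖ := by
  have h1 : ‖QopL M x‖ ^ 2 ≤ ‖x‖ ^ 2 := by
    rw [norm_sq_eq, norm_sq_eq]
    apply Summable.tsum_le_tsum _ (summable_coord_sq _) (summable_coord_sq x)
    intro j
    rw [QopL_coord]
    by_cases h : M ≤ j <;> simp [h]
  calc ‖QopL M x‖ = Real.sqrt (‖QopL M x‖ ^ 2) := (Real.sqrt_sq (norm_nonneg _)).symm
    _ ≤ Real.sqrt (‖x‖ ^ 2) := Real.sqrt_le_sqrt h1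
    _ = ‖x‖ := Real.sqrt_sq (norm_nonneg _)

def Qop (M : ℕ) : OpH := (QopL M).mkContinuous 1 (fun x => by simpa using QopL_norm_le M x)

lemma Qop_coord (M : ℕ) (x : Hl2) (j : ℕ) :
    (Qop M x : ∀ _ : ℕ, ℂ) j = if M ≤ j then (x : ∀ _ : ℕ, ℂ) j else 0 := rfl

lemma Qop_norm_le (M : ℕ) (x : Hl2) : ‖Qop M x‖ ≤ ‖x‖ := QopL_norm_le M x

/-- pointwise convergence to zero of the tails -/
lemma Qop_tendsto (x : Hl2) : Tendsto (fun M => ‖Qop M x‖) atTop (𝓝 0) := by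
  have key : ∀ M, ‖Qop M x‖ ^ 2 = ∑' i, ‖(x : ∀ _ : ℕ, ℂ) (i + M)‖ ^ 2 := by
    intro M
    rw [norm_sq_eq]
    apply (Function.Injective.tsum_eq (f := fun j => ‖(Qop M x : ∀ _ : ℕ, ℂ) j‖ ^ 2)
      (g := fun i => i + M) (fun a b h => by simpa using h) ?_).symm.trans ?_
    · intro j hj
      have hMj : M ≤ j := by
        by_contra hc
        apply hj
        simp [Function.mem_support, Qop_coord, hc]
      exact ⟨j - M, by simp; omega⟩
    · apply tsum_congr; intro i; simp [Qop_coord]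
  have h2 : Tendsto (fun M => ‖Qop M x‖ ^ 2) atTop (𝓝 0) := by
    simp only [key]
    exact tendsto_sum_nat_add (f := fun j => ‖(x : ∀ _ : ℕ, ℂ) j‖ ^ 2)
  have h3 := h2.sqrt
  simp only [Real.sqrt_zero] at h3
  refine h3.congr fun M => ?_
  rw [Real.sqrt_sq (norm_nonneg _)]

lemma inner_Qop (M : ℕ) (u v : Hl2) : (inner ℂ (Qop M u) v : ℂ) = inner ℂ u (Qop M v) := by
  rw [lp.inner_eq_tsum, lp.inner_eq_tsum]
  apply tsum_congr
  intro i
  simp only [RCLike.inner_apply, Qop_coord]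
  by_cases h : M ≤ i <;> simp [h]

lemma entry_comp_Qop_right (X : OpH) (M j k : ℕ) :
    entry (X ∘L Qop M) j k = if M ≤ k then entry X j k else 0 := by
  have hq : Qop M (eV k) = if M ≤ k then eV k else 0 := by
    apply lp.ext; funext i
    rw [Qop_coord]
    rw [show (((if M ≤ k then eV k else 0 : Hl2)) : ∀ _ : ℕ, ℂ) i
      = (if M ≤ k then ((eV k : Hl2) : ∀ _ : ℕ, ℂ) i else ((0 : Hl2) : ∀ _ : ℕ, ℂ) i)
      from apply_ite (fun v : Hl2 => (v : ∀ _ : ℕ, ℂ) i) _ _ _]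
    by_cases hi : i = k
    · subst hi
      by_cases h : M ≤ i <;> simp [h]
    · have hek : ((eV k : Hl2) : ∀ _ : ℕ, ℂ) i = 0 := lp.single_apply_ne 2 k _ hi
      by_cases h : M ≤ k <;> by_cases h2 : M ≤ i <;> simp [h, h2, hek]
  rw [entry_eq, ContinuousLinearMap.comp_apply, hq]
  by_cases h : M ≤ k <;> simp [h, ← entry_eq]

lemma entry_comp_Qop_left (X : OpH) (M j k : ℕ) :
    entry (Qop M ∘L X) j k = if M ≤ j then entry X j k else 0 := by
  rw [entry_eq, ContinuousLinearMap.comp_apply, Qop_coord, ← entry_eq]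

lemma one_sub_Qop_coord (M : ℕ) (x : Hl2) (j : ℕ) :
    (((1 - Qop M) x : Hl2) : ∀ _ : ℕ, ℂ) j = if M ≤ j then 0 else (x : ∀ _ : ℕ, ℂ) j := by
  have : ((1 - Qop M) x : Hl2) = x - Qop M x := by
    simp [ContinuousLinearMap.sub_apply]
  rw [this, lp.coeFn_sub, Pi.sub_apply, Qop_coord]
  by_cases h : M ≤ j <;> simp [h]

lemma one_sub_Qop_norm_le (M : ℕ) (x : Hl2) : ‖(1 - Qop M) x‖ ≤ ‖x‖ := by
  have h1 : ‖(1 - Qop M) x‖ ^ 2 ≤ ‖x‖ ^ 2 := by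
    rw [norm_sq_eq, norm_sq_eq]
    apply Summable.tsum_le_tsum _ (summable_coord_sq _) (summable_coord_sq x)
    intro j
    rw [one_sub_Qop_coord]
    by_cases h : M ≤ j <;> simp [h]
  calc ‖(1 - Qop M) x‖ = Real.sqrt (‖(1 - Qop M) x‖ ^ 2) := (Real.sqrt_sq (norm_nonneg _)).symm
    _ ≤ Real.sqrt (‖x‖ ^ 2) := Real.sqrt_le_sqrt h1
    _ = ‖x‖ := Real.sqrt_sq (norm_nonneg _)

/-- norm collapse of `Q_M ∘ X` for compact `X` -/
lemma Qop_comp_tendsto {X : OpH} (hX : IsCompactOperator ⇑X) :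
    Tendsto (fun M => ‖Qop M ∘L X‖) atTop (𝓝 0) := by
  rw [Metric.tendsto_atTop]
  intro ε hε
  obtain ⟨K, hK, hKmem⟩ := hX
  obtain ⟨δ, hδ, hball⟩ := Metric.mem_nhds_iff.1 hKmem
  set ε' := ε * δ / 6 with hε'def
  have hε' : 0 < ε' := by positivity
  obtain ⟨t, htfin, htcov⟩ := (Metric.totallyBounded_iff.1 hK.totallyBounded) ε' hε'
  have hev : ∀ᶠ M in atTop, ∀ y ∈ t, ‖Qop M y‖ < ε' :=
    (Set.Finite.eventually_all htfin).2 fun y _ =>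
      (Qop_tendsto y).eventually_lt_const hε'
  obtain ⟨N₀, hN₀⟩ := hev.exists_forall_of_atTop
  refine ⟨N₀, fun M hM => ?_⟩
  have hbound : ∀ x : Hl2, ‖(Qop M ∘L X) x‖ ≤ (4 * ε' / δ) * ‖x‖ := by
    intro x
    rcases eq_or_ne x 0 with rfl | hx
    · simp
    · have hxn : 0 < ‖x‖ := norm_pos_iff.2 hx
      set z : Hl2 := ((δ / 2 / ‖x‖ : ℝ) : ℂ) • x with hz
      have hzn : ‖z‖ = δ / 2 := by
        rw [hz, norm_smul, Complex.norm_real, Real.norm_eq_abs,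
          abs_of_pos (by positivity : (0:ℝ) < δ / 2 / ‖x‖)]
        field_simp
      have hzK : X z ∈ K := hball (by simp [Metric.mem_ball, hzn]; linarith)
      obtain ⟨y, hyt, hy⟩ := Set.mem_iUnion₂.1 (htcov hzK)
      have h1 : ‖Qop M (X z)‖ ≤ ‖X z - y‖ + ‖Qop M y‖ := by
        calc ‖Qop M (X z)‖ = ‖Qop M (X z - y) + Qop M y‖ := by
              rw [← map_add, sub_add_cancel]
          _ ≤ ‖Qop M (X z - y)‖ + ‖Qop M y‖ := norm_add_le _ _
          _ ≤ ‖X z - y‖ + ‖Qop M y‖ := by gcongr; exact Qop_norm_le _ _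
      have h2 : ‖Qop M (X z)‖ < 2 * ε' := by
        have hd : ‖X z - y‖ < ε' := by
          rw [← dist_eq_norm]; exact Metric.mem_ball.1 hy
        have := hN₀ M hM y hyt
        linarith
      have hxz : x = ((2 * ‖x‖ / δ : ℝ) : ℂ) • z := by
        rw [hz, smul_smul]
        rw [show ((2 * ‖x‖ / δ : ℝ) : ℂ) * ((δ / 2 / ‖x‖ : ℝ) : ℂ)
          = (((2 * ‖x‖ / δ) * (δ / 2 / ‖x‖) : ℝ) : ℂ) by push_cast; ring]
        rw [show (2 * ‖x‖ / δ) * (δ / 2 / ‖x‖) = 1 by field_simp]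
        simp
      calc ‖(Qop M ∘L X) x‖ = ‖((2 * ‖x‖ / δ : ℝ) : ℂ) • (Qop M (X z))‖ := by
            rw [ContinuousLinearMap.comp_apply]
            nth_rewrite 1 [hxz]
            rw [_root_.map_smul, _root_.map_smul]
        _ = (2 * ‖x‖ / δ) * ‖Qop M (X z)‖ := by
            rw [norm_smul, Complex.norm_real, Real.norm_eq_abs,
              abs_of_pos (by positivity : (0:ℝ) < 2 * ‖x‖ / δ)]
        _ ≤ (2 * ‖x‖ / δ) * (2 * ε') := by gcongr
        _ = (4 * ε' / δ) * ‖x‖ := by ring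
  have hop : ‖Qop M ∘L X‖ ≤ 4 * ε' / δ :=
    ContinuousLinearMap.opNorm_le_bound _ (by positivity) hbound
  have h23 : 4 * ε' / δ = 2 / 3 * ε := by
    rw [hε'def]; field_simp; ring
  rw [Real.dist_eq, sub_zero, _root_.abs_of_nonneg (norm_nonneg _)]
  rw [h23] at hop
  linarith

/-- for the right tail: reduce to the left via the adjoint -/
lemma comp_Qop_norm_le (A : OpH) (M : ℕ) :
    ‖A ∘L Qop M‖ ≤ Real.sqrt ‖Qop M ∘L (ContinuousLinearMap.adjoint A ∘L A)‖ := by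
  set c := ‖Qop M ∘L (ContinuousLinearMap.adjoint A ∘L A)‖ with hc
  have hc0 : 0 ≤ c := norm_nonneg _
  apply ContinuousLinearMap.opNorm_le_bound _ (Real.sqrt_nonneg _)
  intro x
  have key : ‖A (Qop M x)‖ ^ 2 ≤ c * ‖x‖ ^ 2 := by
    have h1 : (‖A (Qop M x)‖ : ℝ) ^ 2 = RCLike.re (inner ℂ (A (Qop M x)) (A (Qop M x)) : ℂ) :=
      (inner_self_eq_norm_sq _).symm
    have h2 : (inner ℂ (A (Qop M x)) (A (Qop M x)) : ℂ)
        = inner ℂ x ((Qop M ∘L (ContinuousLinearMap.adjoint A ∘L A)) (Qop M x)) := by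
      rw [← ContinuousLinearMap.adjoint_inner_right]
      rw [inner_Qop]
      simp [ContinuousLinearMap.comp_apply]
    have h4 : RCLike.re (inner ℂ x ((Qop M ∘L (ContinuousLinearMap.adjoint A ∘L A)) (Qop M x)) : ℂ)
        ≤ ‖x‖ * (c * ‖x‖) := by
      calc RCLike.re (inner ℂ x ((Qop M ∘L (ContinuousLinearMap.adjoint A ∘L A)) (Qop M x)) : ℂ)
          ≤ ‖(inner ℂ x ((Qop M ∘L (ContinuousLinearMap.adjoint A ∘L A)) (Qop M x)) : ℂ)‖ :=
            RCLike.re_le_norm _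
        _ ≤ ‖x‖ * ‖(Qop M ∘L (ContinuousLinearMap.adjoint A ∘L A)) (Qop M x)‖ :=
            norm_inner_le_norm (𝕜 := ℂ) x _
        _ ≤ ‖x‖ * (c * ‖Qop M x‖) := by
            have := (Qop M ∘L (ContinuousLinearMap.adjoint A ∘L A)).le_opNorm (Qop M x)
            have hx0 : (0:ℝ) ≤ ‖x‖ := norm_nonneg _
            nlinarith [norm_nonneg ((Qop M ∘L (ContinuousLinearMap.adjoint A ∘L A)) (Qop M x))]
        _ ≤ ‖x‖ * (c * ‖x‖) :=
            mul_le_mul_of_nonneg_left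
              (mul_le_mul_of_nonneg_left (Qop_norm_le M x) hc0) (norm_nonneg x)
    rw [h1, h2]
    calc RCLike.re (inner ℂ x ((Qop M ∘L (ContinuousLinearMap.adjoint A ∘L A)) (Qop M x)) : ℂ)
        ≤ ‖x‖ * (c * ‖x‖) := h4
      _ = c * ‖x‖ ^ 2 := by ring
  calc ‖(A ∘L Qop M) x‖ = Real.sqrt (‖A (Qop M x)‖ ^ 2) := by
        rw [Real.sqrt_sq (norm_nonneg _)]; rfl
    _ ≤ Real.sqrt (c * ‖x‖ ^ 2) := Real.sqrt_le_sqrt key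
    _ = Real.sqrt c * ‖x‖ := by
        rw [Real.sqrt_mul hc0, Real.sqrt_sq (norm_nonneg _)]

lemma entry_sub (A B : OpH) (j k : ℕ) : entry (A - B) j k = entry A j k - entry B j k := by
  simp [entry, ContinuousLinearMap.sub_apply, inner_sub_right]

lemma entry_add (A B : OpH) (j k : ℕ) : entry (A + B) j k = entry A j k + entry B j k := by
  simp [entry, ContinuousLinearMap.add_apply, inner_add_right]

lemma entry_smul (c : ℂ) (A : OpH) (j k : ℕ) : entry (c • A) j k = c * entry A j k := by
  simp [entry, ContinuousLinearMap.smul_apply, inner_smul_right]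

lemma entry_sum {ι : Type*} (s : Finset ι) (f : ι → OpH) (j k : ℕ) :
    entry (∑ i ∈ s, f i) j k = ∑ i ∈ s, entry (f i) j k := by
  simp [entry, ContinuousLinearMap.sum_apply, inner_sum]

lemma inner_eV (i j : ℕ) : (inner ℂ (eV i) (eV j) : ℂ) = if i = j then 1 else 0 := by
  rw [coord_eq_inner]
  rcases eq_or_ne i j with rfl | h
  · simp [eV, lp.single_apply_self]
  · simp [eV, lp.single_apply_ne 2 j _ h, h]

def Eop (j k : ℕ) : OpH := (innerSL ℂ (eV k)).smulRight (eV j)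

lemma Eop_apply (j k : ℕ) (x : Hl2) : Eop j k x = (inner ℂ (eV k) x : ℂ) • eV j := rfl

lemma norm_Eop_le (j k : ℕ) : ‖Eop j k‖ ≤ 1 := by
  apply ContinuousLinearMap.opNorm_le_bound _ zero_le_one
  intro x
  rw [Eop_apply, norm_smul, norm_eV, mul_one, one_mul]
  calc ‖(inner ℂ (eV k) x : ℂ)‖ ≤ ‖eV k‖ * ‖x‖ := norm_inner_le_norm _ _
    _ = ‖x‖ := by rw [norm_eV, one_mul]

lemma entry_Eop (a b j k : ℕ) :
    entry (Eop a b) j k = if j = a ∧ k = b then 1 else 0 := by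
  rw [entry_eq]
  rw [show (Eop a b (eV k) : ∀ _ : ℕ, ℂ) j = ((inner ℂ (eV b) (eV k) : ℂ) • eV a : Hl2) j from rfl]
  rw [lp.coeFn_smul, Pi.smul_apply, inner_eV]
  rcases eq_or_ne j a with rfl | hj
  · rcases eq_or_ne k b with rfl | hk
    · simp [eV, lp.single_apply_self]
    · have hbk : b ≠ k := fun h => hk h.symm
      simp [hk, hbk, eV]
  · have : (eV a : ∀ _ : ℕ, ℂ) j = 0 := lp.single_apply_ne 2 a _ hj
    simp [this, hj]

def blockSum (M : ℕ) (c : ℕ → ℕ → ℂ) : OpH :=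
  ∑ p ∈ Finset.range M ×ˢ Finset.range M, c p.1 p.2 • Eop p.1 p.2

lemma entry_blockSum (M : ℕ) (c : ℕ → ℕ → ℂ) (j k : ℕ) :
    entry (blockSum M c) j k = if j < M ∧ k < M then c j k else 0 := by
  rw [blockSum, entry_sum]
  have h1 : ∀ p ∈ Finset.range M ×ˢ Finset.range M,
      entry (c p.1 p.2 • Eop p.1 p.2) j k = if p = (j, k) then c p.1 p.2 else 0 := by
    intro p _
    rw [entry_smul, entry_Eop]
    by_cases h : p = (j, k)
    · subst h; simp
    · have hne : ¬ (j = p.1 ∧ k = p.2) := by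
        intro hc
        exact h (Prod.ext hc.1.symm hc.2.symm)
      simp [hne, h]
  rw [Finset.sum_congr rfl h1, Finset.sum_ite_eq' (Finset.range M ×ˢ Finset.range M) (j, k)
    (fun p => c p.1 p.2)]
  simp [Finset.mem_product, Finset.mem_range]

lemma norm_blockSum_le (M : ℕ) (c : ℕ → ℕ → ℂ) :
    ‖blockSum M c‖ ≤ ∑ p ∈ Finset.range M ×ˢ Finset.range M, ‖c p.1 p.2‖ := by
  refine (norm_sum_le _ _).trans ?_
  apply Finset.sum_le_sum
  intro p _
  rw [norm_smul (c p.1 p.2) (Eop p.1 p.2)]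
  calc ‖c p.1 p.2‖ * ‖Eop p.1 p.2‖ ≤ ‖c p.1 p.2‖ * 1 := by
        gcongr; exact norm_Eop_le _ _
    _ = ‖c p.1 p.2‖ := mul_one _

lemma single_eq_smul_eV (j : ℕ) (c : ℂ) : lp.single 2 j c = c • eV j := by
  rw [eV, ← lp.single_smul]
  norm_num

lemma sub_Qop_eq_sum (M : ℕ) (x : Hl2) :
    x - Qop M x = ∑ j ∈ Finset.range M, lp.single 2 j ((x : ∀ _ : ℕ, ℂ) j) := by
  apply lp.ext
  funext i
  rw [lp.coeFn_sub, Pi.sub_apply, Qop_coord]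
  simp only [lp.coeFn_sum, Finset.sum_apply, lp.single_apply, Pi.single_apply, Finset.sum_ite_eq, Finset.sum_ite_eq']
  by_cases h : M ≤ i
  · simp only [h, if_true]
    rw [if_neg (fun hc => absurd (Finset.mem_range.1 hc) (by omega))]
    ring
  · simp only [h, if_false]
    rw [if_pos (Finset.mem_range.2 (by omega))]
    ring

lemma decomp (A : OpH) (M : ℕ) :
    A - blockSum M (fun j k => entry A j k) = (Qop M ∘L A) + ((1 - Qop M) ∘L (A ∘L Qop M)) := by
  apply ext_entries
  intro j k
  rw [entry_sub, entry_blockSum, entry_add, entry_comp_Qop_left]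
  have h1 : entry ((1 - Qop M) ∘L (A ∘L Qop M)) j k
      = entry (A ∘L Qop M) j k - (if M ≤ j then entry (A ∘L Qop M) j k else 0) := by
    rw [show (1 - Qop M) ∘L (A ∘L Qop M) = (A ∘L Qop M) - Qop M ∘L (A ∘L Qop M) by
      rw [ContinuousLinearMap.sub_comp, ContinuousLinearMap.one_def,
        ContinuousLinearMap.id_comp]]
    rw [entry_sub, entry_comp_Qop_left]
  rw [h1, entry_comp_Qop_right]
  split_ifs <;> first | (exfalso; omega) | ring

lemma norm_A_sub_F_le (A : OpH) (M : ℕ) :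
    ‖A - blockSum M (fun j k => entry A j k)‖ ≤ ‖Qop M ∘L A‖ + ‖A ∘L Qop M‖ := by
  rw [decomp]
  refine (norm_add_le _ _).trans ?_
  gcongr
  apply ContinuousLinearMap.opNorm_le_bound _ (norm_nonneg _)
  intro x
  calc ‖((1 - Qop M) ∘L (A ∘L Qop M)) x‖ = ‖(1 - Qop M) ((A ∘L Qop M) x)‖ := rfl
    _ ≤ ‖(A ∘L Qop M) x‖ := one_sub_Qop_norm_le _ _
    _ ≤ ‖A ∘L Qop M‖ * ‖x‖ := (A ∘L Qop M).le_opNorm x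

lemma tendsto_A_sub_F {A : OpH} (hA : IsCompactOperator ⇑A) :
    Tendsto (fun M => ‖A - blockSum M (fun j k => entry A j k)‖) atTop (𝓝 0) := by
  have h1 := Qop_comp_tendsto hA
  have hAc : IsCompactOperator ⇑(ContinuousLinearMap.adjoint A ∘L A) := by
    have := hA.clm_comp (ContinuousLinearMap.adjoint A)
    simpa [ContinuousLinearMap.coe_comp'] using this
  have h2 := Qop_comp_tendsto hAc
  have h2' : Tendsto (fun M => Real.sqrt ‖Qop M ∘L (ContinuousLinearMap.adjoint A ∘L A)‖)
      atTop (𝓝 0) := by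
    have := h2.sqrt
    simpa only [Real.sqrt_zero] using this
  have hsum := h1.add h2'
  rw [add_zero] at hsum
  apply squeeze_zero (fun M => norm_nonneg _) (fun M => ?_) hsum
  exact (norm_A_sub_F_le A M).trans (by gcongr; exact comp_Qop_norm_le A M)

end STC

open STC

/-- if `τ` is continuous at `(0,0)` with `τ(0,0)=1` and satisfies (A),
then `τ_N ⋆ A → A` strongly for every bounded `A`, and in norm when `A` is compact. -/
theorem schur_truncation_convergence
    (τ : ℝ → ℝ → ℂ)
    (hcont : ContinuousWithinAt (fun q : ℝ × ℝ => τ q.1 q.2) (Set.Ici 0 ×ˢ Set.Ici 0) (0, 0))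
    (h00 : τ 0 0 = 1) (hA : AssumptionA τ)
    (A : OpH) (B : ℕ → OpH) (hBmul : ∀ N : ℕ, 1 ≤ N → IsSchurMul (scaleT τ N) A (B N)) :
    (∀ x : Hl2, Tendsto (fun N : ℕ => B N x) atTop (𝓝 (A x))) ∧
    (IsCompactOperator ⇑A → Tendsto (fun N : ℕ => ‖B N - A‖) atTop (𝓝 0)) := by
  classical
  obtain ⟨C₀, hC₀⟩ := hA
  set C : ℝ := max C₀ 0 with hCdef
  have hC0 : 0 ≤ C := le_max_right _ _
  have hC : ∀ N : ℕ, 1 ≤ N → ∀ X : OpH, ∃ B' : OpH,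
      IsSchurMul (scaleT τ N) X B' ∧ ‖B'‖ ≤ C * ‖X‖ := by
    intro N hN X
    obtain ⟨B', h1, h2⟩ := hC₀ N hN X
    exact ⟨B', h1, h2.trans (mul_le_mul_of_nonneg_right (le_max_left _ _) (norm_nonneg _))⟩
  have hBnorm : ∀ N : ℕ, 1 ≤ N → ‖B N‖ ≤ C * ‖A‖ := by
    intro N hN
    obtain ⟨B', h1, h2⟩ := hC N hN A
    have hBB : B N = B' := ext_entries fun j k => by rw [hBmul N hN j k, h1 j k]
    rw [hBB]; exact h2
  have hτb : ∀ N : ℕ, 1 ≤ N → ∀ j k : ℕ, ‖τ ((j : ℝ) / N) ((k : ℝ) / N)‖ ≤ C := by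
    intro N hN j k
    obtain ⟨B', h1, h2⟩ := hC N hN (Eop j k)
    have he : entry B' j k = τ ((j:ℝ)/N) ((k:ℝ)/N) := by
      rw [h1 j k, entry_Eop]
      simp [scaleT]
    calc ‖τ ((j:ℝ)/N) ((k:ℝ)/N)‖ = ‖entry B' j k‖ := by
          rw [he]
      _ ≤ ‖B'‖ := abs_entry_le B' j k
      _ ≤ C * ‖Eop j k‖ := h2
      _ ≤ C * 1 := mul_le_mul_of_nonneg_left (norm_Eop_le j k) hC0
      _ = C := mul_one C
  have hτt : ∀ j k : ℕ, Tendsto (fun N : ℕ => τ ((j:ℝ)/N) ((k:ℝ)/N)) atTop (𝓝 1) := by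
    intro j k
    have hpt : Tendsto (fun N : ℕ => (((j:ℝ)/N, (k:ℝ)/N) : ℝ × ℝ)) atTop
        (𝓝[Set.Ici 0 ×ˢ Set.Ici 0] (0, 0)) := by
      apply tendsto_nhdsWithin_of_tendsto_nhds_of_eventually_within
      · exact (tendsto_const_div_atTop_nhds_zero_nat (j:ℝ)).prodMk_nhds
          (tendsto_const_div_atTop_nhds_zero_nat (k:ℝ))
      · apply Eventually.of_forall
        intro N
        have hj : ((j:ℝ)/(N:ℝ)) ∈ Set.Ici (0:ℝ) := Set.mem_Ici.2 (by positivity)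
        have hk' : ((k:ℝ)/(N:ℝ)) ∈ Set.Ici (0:ℝ) := Set.mem_Ici.2 (by positivity)
        exact Set.mem_prod.2 ⟨hj, hk'⟩
    have hcont' : Tendsto (fun q : ℝ × ℝ => τ q.1 q.2)
        (𝓝[Set.Ici 0 ×ˢ Set.Ici 0] ((0 : ℝ), (0 : ℝ))) (𝓝 (τ 0 0)) := hcont
    have hco := hcont'.comp hpt
    simpa [Function.comp_def, h00] using hco
  have hkey : ∀ k : ℕ, Tendsto (fun N : ℕ => ‖(B N - A) (eV k)‖) atTop (𝓝 0) := by
    intro k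
    have hcoord : ∀ N : ℕ, 1 ≤ N → ∀ j : ℕ, (((B N - A) (eV k) : Hl2) : ∀ _ : ℕ, ℂ) j
        = (τ ((j:ℝ)/N) ((k:ℝ)/N) - 1) * entry A j k := by
      intro N hN j
      rw [← entry_eq, entry_sub, hBmul N hN j k]
      simp only [scaleT]
      ring
    have hdom := tendsto_tsum_of_dominated_convergence
      (f := fun (N : ℕ) (j : ℕ) => ‖(((B N - A) (eV k) : Hl2) : ∀ _ : ℕ, ℂ) j‖ ^ 2)
      (g := fun _ : ℕ => (0:ℝ))
      (bound := fun j => (C+1)^2 * ‖((A (eV k) : Hl2) : ∀ _ : ℕ, ℂ) j‖^2)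
      (𝓕 := atTop)
      ((summable_coord_sq (A (eV k))).mul_left ((C+1)^2))
      (by
        intro j
        have h1 : Tendsto (fun N : ℕ => (τ ((j:ℝ)/N) ((k:ℝ)/N) - 1) * entry A j k)
            atTop (𝓝 0) := by
          have := ((hτt j k).sub_const 1).mul_const (entry A j k)
          simpa using this
        have h2 : Tendsto (fun N : ℕ => (((B N - A) (eV k) : Hl2) : ∀ _ : ℕ, ℂ) j)
            atTop (𝓝 0) := by
          apply h1.congr'
          filter_upwards [eventually_ge_atTop 1] with N hN
          exact (hcoord N hN j).symm
        have h3 := h2.norm.pow 2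
        simpa using h3)
      (by
        filter_upwards [eventually_ge_atTop 1] with N hN
        intro j
        have hcj := hcoord N hN j
        have haj : entry A j k = ((A (eV k) : Hl2) : ∀ _ : ℕ, ℂ) j := entry_eq A j k
        have hb : ‖(((B N - A) (eV k) : Hl2) : ∀ _ : ℕ, ℂ) j‖
            ≤ (C+1) * ‖((A (eV k) : Hl2) : ∀ _ : ℕ, ℂ) j‖ := by
          rw [hcj, haj, norm_mul]
          apply mul_le_mul_of_nonneg_right _ (norm_nonneg _)
          calc ‖τ ((j:ℝ)/N) ((k:ℝ)/N) - 1‖ ≤ ‖τ ((j:ℝ)/N) ((k:ℝ)/N)‖ + ‖(1:ℂ)‖ :=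
                norm_sub_le _ _
            _ ≤ C + 1 := by
                have := hτb N hN j k
                simp only [norm_one]
                linarith
        have hnn : (0:ℝ) ≤ ‖(((B N - A) (eV k) : Hl2) : ∀ _ : ℕ, ℂ) j‖ ^ 2 := by positivity
        rw [Real.norm_eq_abs, _root_.abs_of_nonneg hnn]
        calc ‖(((B N - A) (eV k) : Hl2) : ∀ _ : ℕ, ℂ) j‖ ^ 2
            ≤ ((C+1) * ‖((A (eV k) : Hl2) : ∀ _ : ℕ, ℂ) j‖) ^ 2 := by
              apply pow_le_pow_left₀ (norm_nonneg _) hb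
          _ = (C+1)^2 * ‖((A (eV k) : Hl2) : ∀ _ : ℕ, ℂ) j‖ ^ 2 := by ring)
    have hsq : Tendsto (fun N : ℕ => ‖(B N - A) (eV k)‖ ^ 2) atTop (𝓝 0) := by
      have h0 : (∑' _ : ℕ, (0:ℝ)) = 0 := tsum_zero
      rw [h0] at hdom
      apply hdom.congr
      intro N
      exact (norm_sq_eq _).symm
    have h3 := hsq.sqrt
    simp only [Real.sqrt_zero] at h3
    refine h3.congr fun N => ?_
    rw [Real.sqrt_sq (norm_nonneg _)]
  constructor
  · -- strong convergence
    intro x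
    rw [tendsto_iff_norm_sub_tendsto_zero]
    rw [NormedAddCommGroup.tendsto_nhds_zero]
    intro ε hε
    set D : ℝ := C * ‖A‖ + ‖A‖ + 1 with hDdef
    have hD : 0 < D := by
      have h1 := norm_nonneg A
      have h2 := mul_nonneg hC0 (norm_nonneg A)
      rw [hDdef]
      linarith
    obtain ⟨M, hM⟩ := ((Qop_tendsto x).eventually_lt_const
      (div_pos hε (by linarith : (0:ℝ) < 2*D))).exists
    have hfin : Tendsto (fun N : ℕ => ∑ j ∈ Finset.range M,
        ‖(x : ∀ _ : ℕ, ℂ) j‖ * ‖(B N - A) (eV j)‖) atTop (𝓝 0) := by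
      have := tendsto_finset_sum (Finset.range M)
        (fun j _ => (hkey j).const_mul ‖(x : ∀ _ : ℕ, ℂ) j‖)
      simp only [mul_zero, Finset.sum_const_zero] at this
      exact this
    filter_upwards [eventually_ge_atTop 1, hfin.eventually_lt_const (half_pos hε)]
      with N hN1 hN2
    have hsplit : B N x - A x = (B N - A) (x - Qop M x) + (B N - A) (Qop M x) := by
      rw [← _root_.map_add, sub_add_cancel]
      simp [ContinuousLinearMap.sub_apply]
    have hterm1 : ‖(B N - A) (x - Qop M x)‖ < ε / 2 := by
      rw [sub_Qop_eq_sum, _root_.map_sum]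
      calc ‖∑ j ∈ Finset.range M, (B N - A) (lp.single 2 j ((x : ∀ _ : ℕ, ℂ) j))‖
          ≤ ∑ j ∈ Finset.range M, ‖(B N - A) (lp.single 2 j ((x : ∀ _ : ℕ, ℂ) j))‖ :=
            norm_sum_le _ _
        _ = ∑ j ∈ Finset.range M, ‖(x : ∀ _ : ℕ, ℂ) j‖ * ‖(B N - A) (eV j)‖ := by
            apply Finset.sum_congr rfl
            intro j _
            rw [single_eq_smul_eV, _root_.map_smul, norm_smul]
        _ < ε / 2 := hN2
    have hterm2 : ‖(B N - A) (Qop M x)‖ ≤ ε / 2 := by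
      calc ‖(B N - A) (Qop M x)‖ ≤ ‖B N - A‖ * ‖Qop M x‖ := (B N - A).le_opNorm _
        _ ≤ D * (ε / (2 * D)) := by
            apply mul_le_mul
            · calc ‖B N - A‖ ≤ ‖B N‖ + ‖A‖ := norm_sub_le _ _
                _ ≤ C * ‖A‖ + ‖A‖ := by
                    have := hBnorm N hN1
                    linarith
                _ ≤ D := by rw [hDdef]; linarith
            · exact le_of_lt hM
            · exact norm_nonneg _
            · linarith
        _ = ε / 2 := by
            rw [eq_div_iff (two_ne_zero)]
            field_simp
    rw [norm_norm]
    calc ‖B N x - A x‖ ≤ ‖(B N - A) (x - Qop M x)‖ + ‖(B N - A) (Qop M x)‖ := by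
          rw [hsplit]; exact norm_add_le _ _
      _ < ε / 2 + ε / 2 := by
          apply add_lt_add_of_lt_of_le hterm1 hterm2
      _ = ε := add_halves ε
  · -- norm convergence for compact A
    intro hcpt
    rw [NormedAddCommGroup.tendsto_nhds_zero]
    intro ε hε
    have hF := tendsto_A_sub_F hcpt
    obtain ⟨M, hM⟩ := (hF.eventually_lt_const
      (div_pos hε (by linarith : (0:ℝ) < 2*(C+2)))).exists
    have hS : Tendsto (fun N : ℕ => ∑ p ∈ Finset.range M ×ˢ Finset.range M,
        ‖(τ ((p.1:ℝ)/N) ((p.2:ℝ)/N) - 1) * entry A p.1 p.2‖) atTop (𝓝 0) := by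
      have hterm : ∀ p ∈ Finset.range M ×ˢ Finset.range M,
          Tendsto (fun N : ℕ => ‖(τ ((p.1:ℝ)/N) ((p.2:ℝ)/N) - 1) * entry A p.1 p.2‖)
            atTop (𝓝 0) := by
        intro p _
        have h1 := ((hτt p.1 p.2).sub_const 1).mul_const (entry A p.1 p.2)
        have h2 := h1.norm
        simpa using h2
      have := tendsto_finset_sum (Finset.range M ×ˢ Finset.range M) hterm
      simpa using this
    filter_upwards [eventually_ge_atTop 1, hS.eventually_lt_const (half_pos hε)]
      with N hN1 hN2
    obtain ⟨E, hE1, hE2⟩ := hC N hN1 (A - blockSum M (fun j k => entry A j k))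
    have hid : B N - A
        = blockSum M (fun j k => (τ ((j:ℝ)/N) ((k:ℝ)/N) - 1) * entry A j k)
          + (E - (A - blockSum M (fun j k => entry A j k))) := by
      apply ext_entries
      intro j k
      rw [entry_sub, entry_add, entry_blockSum, entry_sub, entry_sub,
        hBmul N hN1 j k, hE1 j k, entry_sub, entry_blockSum]
      simp only [scaleT]
      by_cases h : j < M ∧ k < M
      · simp only [if_pos h]
        ring
      · simp only [if_neg h]
        ring
    rw [norm_norm, hid]
    have hm1 : ‖blockSum M (fun j k => (τ ((j:ℝ)/N) ((k:ℝ)/N) - 1) * entry A j k)‖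
        < ε / 2 := lt_of_le_of_lt (norm_blockSum_le M _) hN2
    have hm2 : ‖E - (A - blockSum M (fun j k => entry A j k))‖ ≤ ε / 2 := by
      have h3 : ‖A - blockSum M (fun j k => entry A j k)‖ ≤ ε/(2*(C+2)) := le_of_lt hM
      calc ‖E - (A - blockSum M (fun j k => entry A j k))‖
          ≤ ‖E‖ + ‖A - blockSum M (fun j k => entry A j k)‖ := norm_sub_le _ _
        _ ≤ C * ‖A - blockSum M (fun j k => entry A j k)‖
            + ‖A - blockSum M (fun j k => entry A j k)‖ := by linarith [hE2]
        _ = (C + 1) * ‖A - blockSum M (fun j k => entry A j k)‖ := by ring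
        _ ≤ (C + 1) * (ε/(2*(C+2))) := by
            apply mul_le_mul_of_nonneg_left h3 (by linarith)
        _ ≤ (C + 2) * (ε/(2*(C+2))) := by
            have hpos : (0:ℝ) ≤ ε/(2*(C+2)) :=
              le_of_lt (div_pos hε (by linarith : (0:ℝ) < 2*(C+2)))
            apply mul_le_mul_of_nonneg_right (by linarith) hpos
        _ = ε / 2 := by
            have hne : C + 2 ≠ 0 := (by linarith : (0:ℝ) < C + 2).ne'
            rw [← mul_div_assoc, show (2*(C+2)) = (C+2)*2 by ring,
              mul_div_mul_left _ _ hne]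
    have hfinal := add_lt_add_of_lt_of_le hm1 hm2
    rw [add_halves] at hfinal
    exact lt_of_le_of_lt (norm_add_le _ _) hfinal
end
end

section
/- Let σ be a bounded function on [0,∞)² satisfying Assumption (C), with σ(0,0) = 0, and such that for some ε > 0 and some β > 1/2 there exists C_β > 0 with |σ(x,y)| ≤ C_β |log(x+y)|^{−β} for all 0 ≤ x,y ≤ ε. Then for every A ∈ ℬ₀ and every N ≥ 1, σ_N ⋆ A is Hilbert–Schmidt, and there is a constant C, independent of N, with ‖σ_N ⋆ A‖_{𝔖₂} ≤ C. -/
open Complex Filter Topology MeasureTheory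

noncomputable section

lemma aux_bernoulli {x p : ℝ} (hx : 0 ≤ x) (hp0 : 0 ≤ p) (hp1 : p ≤ 1) :
    x ^ p ≤ 1 + p * (x - 1) := by
  have h := Real.geom_mean_le_arith_mean2_weighted hp0 (by linarith : (0:ℝ) ≤ 1 - p)
    hx zero_le_one (by ring)
  rw [Real.one_rpow] at h
  nlinarith [h]

lemma aux_key {a b p : ℝ} (ha : 1 ≤ a) (hab : a ≤ b) (hp0 : 0 < p) (hp1 : p ≤ 1) :
    a ^ p * b ≤ b ^ p * b + p * (a - b) * b ^ p := by
  have ha0 : (0:ℝ) < a := lt_of_lt_of_le one_pos ha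
  have hb0 : (0:ℝ) < b := lt_of_lt_of_le ha0 hab
  have h1 : (a / b) ^ p ≤ 1 + p * (a / b - 1) :=
    aux_bernoulli (by positivity) hp0.le hp1
  rw [Real.div_rpow ha0.le hb0.le, div_le_iff₀ (by positivity)] at h1
  have h2 := mul_le_mul_of_nonneg_right h1 hb0.le
  calc a ^ p * b ≤ (1 + p * (a / b - 1)) * b ^ p * b := h2
    _ = b ^ p * b + p * (a - b) * b ^ p := by field_simp

lemma aux_convex {a b p : ℝ} (ha : 1 ≤ a) (hab : a ≤ b) (hp0 : 0 < p) (hp1 : p ≤ 1) :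
    p * (b - a) * b ^ (-(p + 1)) ≤ a ^ (-p) - b ^ (-p) := by
  have ha0 : (0:ℝ) < a := lt_of_lt_of_le one_pos ha
  have hb0 : (0:ℝ) < b := lt_of_lt_of_le ha0 hab
  have hX : (0:ℝ) < a ^ p := Real.rpow_pos_of_pos ha0 _
  have hY : (0:ℝ) < b ^ p := Real.rpow_pos_of_pos hb0 _
  have hXY : a ^ p ≤ b ^ p := Real.rpow_le_rpow ha0.le hab hp0.le
  have hkey := aux_key ha hab hp0 hp1
  have h3 : p * (b - a) * (a ^ p * b ^ p) ≤ (b ^ p - a ^ p) * (b ^ p * b) := by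
    nlinarith [mul_le_mul_of_nonneg_right hkey hX.le,
      mul_le_mul_of_nonneg_right hXY (mul_nonneg (sub_nonneg.2 hXY) hb0.le)]
  rw [Real.rpow_neg ha0.le, Real.rpow_neg hb0.le, Real.rpow_neg hb0.le,
    Real.rpow_add hb0, Real.rpow_one]
  have h4 : (a ^ p)⁻¹ - (b ^ p)⁻¹ = (b ^ p - a ^ p) / (a ^ p * b ^ p) := by
    field_simp
  rw [h4, ← div_eq_mul_inv, div_le_div_iff₀ (by positivity) (by positivity)]
  linarith [h3]

lemma core_sum {p : ℝ} (hp0 : 0 < p) (hp1 : p ≤ 1) {N : ℕ} (hN : 1 ≤ N) (m : ℕ) :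
    ∑ s ∈ Finset.Ico 1 m, (1 + |Real.log ((s : ℝ) / N)|) ^ (-(p + 1)) / ((s : ℝ) + 1)
      ≤ 5 / p := by
  set H : ℕ → ℝ := fun s =>
    (1 / p) * (1 + max (Real.log N - Real.log s) 0) ^ (-p)
      - (4 / p) * (1 + max (Real.log s - Real.log N) 0) ^ (-p) with hH
  have hN0 : (0:ℝ) < N := by exact_mod_cast hN
  have hlN0 : 0 ≤ Real.log N := Real.log_natCast_nonneg N
  have hbase : ∀ s : ℕ, (1:ℝ) ≤ 1 + max (Real.log N - Real.log s) 0 := fun s => by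
    have := le_max_right (Real.log (N:ℝ) - Real.log (s:ℕ)) (0:ℝ); linarith
  have hbase' : ∀ s : ℕ, (1:ℝ) ≤ 1 + max (Real.log s - Real.log N) 0 := fun s => by
    have := le_max_right (Real.log (s:ℕ) - Real.log (N:ℝ)) (0:ℝ); linarith
  have hHub : ∀ s : ℕ, H s ≤ 1 / p := by
    intro s
    have h1 : (1 + max (Real.log N - Real.log s) 0) ^ (-p) ≤ 1 :=
      Real.rpow_le_one_of_one_le_of_nonpos (hbase s) (by linarith)
    have h2 : (0:ℝ) ≤ (1 + max (Real.log s - Real.log N) 0) ^ (-p) :=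
      Real.rpow_nonneg (by linarith [hbase' s]) _
    have h3 : (1/p) * (1 + max (Real.log (N:ℝ) - Real.log s) 0) ^ (-p) ≤ (1/p) * 1 :=
      mul_le_mul_of_nonneg_left h1 (by positivity)
    have h4 : 0 ≤ (4/p) * (1 + max (Real.log (s:ℕ) - Real.log (N:ℝ)) 0) ^ (-p) := by positivity
    simp only [hH]; linarith
  have hHlb : ∀ s : ℕ, -(4 / p) ≤ H s := by
    intro s
    have h1 : (1 + max (Real.log s - Real.log N) 0) ^ (-p) ≤ 1 :=
      Real.rpow_le_one_of_one_le_of_nonpos (hbase' s) (by linarith)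
    have h2 : (0:ℝ) ≤ (1 + max (Real.log N - Real.log s) 0) ^ (-p) :=
      Real.rpow_nonneg (by linarith [hbase s]) _
    have h3 : (4/p) * (1 + max (Real.log (s:ℕ) - Real.log (N:ℝ)) 0) ^ (-p) ≤ (4/p) * 1 :=
      mul_le_mul_of_nonneg_left h1 (by positivity)
    have h4 : 0 ≤ (1/p) * (1 + max (Real.log (N:ℝ) - Real.log (s:ℕ)) 0) ^ (-p) := by positivity
    simp only [hH]; linarith
  have step : ∀ s : ℕ, 1 ≤ s →
      (1 + |Real.log ((s : ℝ) / N)|) ^ (-(p + 1)) / ((s : ℝ) + 1) ≤ H (s + 1) - H s := by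
    intro s hs
    have hs0 : (0:ℝ) < s := by exact_mod_cast hs
    have hs10 : (0:ℝ) < (s:ℝ) + 1 := by positivity
    have hcast : ((s + 1 : ℕ) : ℝ) = (s : ℝ) + 1 := by push_cast; ring
    have hls : Real.log s ≤ Real.log ((s:ℝ) + 1) := Real.log_le_log hs0 (by linarith)
    have hgap1 : 1 / ((s:ℝ) + 1) ≤ Real.log ((s:ℝ) + 1) - Real.log s := by
      have h := Real.log_le_sub_one_of_pos (show (0:ℝ) < (s:ℝ)/((s:ℝ)+1) by positivity)
      rw [Real.log_div hs0.ne' hs10.ne'] at h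
      have heq : (s:ℝ)/((s:ℝ)+1) - 1 = -(1/((s:ℝ)+1)) := by field_simp; ring
      rw [heq] at h; linarith
    have hgap2 : Real.log ((s:ℝ) + 1) - Real.log s ≤ 1 := by
      have h := Real.log_le_sub_one_of_pos (show (0:ℝ) < ((s:ℝ)+1)/(s:ℝ) by positivity)
      rw [Real.log_div hs10.ne' hs0.ne'] at h
      have h2 : ((s:ℝ)+1)/(s:ℝ) - 1 = 1/(s:ℝ) := by field_simp; ring
      have h3 : 1/(s:ℝ) ≤ 1 := by
        rw [div_le_one hs0]; exact_mod_cast hs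
      rw [h2] at h; linarith
    have hlogdiv : Real.log ((s:ℝ)/N) = Real.log s - Real.log N :=
      Real.log_div hs0.ne' hN0.ne'
    rcases lt_or_ge s N with hsN | hsN
    · -- s < N, so s + 1 ≤ N
      have hs1N : ((s:ℝ) + 1) ≤ N := by exact_mod_cast Nat.succ_le_of_lt hsN
      have hls'N : Real.log ((s:ℝ)+1) ≤ Real.log N := Real.log_le_log hs10 hs1N
      have hlsN : Real.log s ≤ Real.log N := le_trans hls hls'N
      have habs : |Real.log ((s:ℝ)/N)| = Real.log N - Real.log s := by
        rw [hlogdiv, _root_.abs_of_nonpos (by linarith)]; ring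
      set a := 1 + (Real.log N - Real.log ((s:ℝ)+1)) with hadef
      set b := 1 + (Real.log N - Real.log s) with hbdef
      have ha1 : 1 ≤ a := by rw [hadef]; linarith
      have hab : a ≤ b := by rw [hadef, hbdef]; linarith
      have hcx := aux_convex ha1 hab hp0 hp1
      have hb0 : (0:ℝ) ≤ b ^ (-(p+1)) := Real.rpow_nonneg (by linarith) _
      have e1 : max (Real.log N - Real.log ((s:ℝ)+1)) 0 = Real.log N - Real.log ((s:ℝ)+1) :=
        max_eq_left (by linarith)
      have e2 : max (Real.log ((s:ℝ)+1) - Real.log N) 0 = 0 := max_eq_right (by linarith)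
      have e3 : max (Real.log (s:ℝ) - Real.log N) 0 = 0 := max_eq_right (by linarith)
      have e4 : max (Real.log N - Real.log (s:ℝ)) 0 = Real.log N - Real.log (s:ℝ) :=
        max_eq_left (by linarith)
      have hHdiff : H (s+1) - H s = (1/p) * (a ^ (-p) - b ^ (-p)) := by
        simp only [hH, hcast, e1, e2, e3, e4, hadef, hbdef]
        ring
      rw [habs, hHdiff]
      have hcx2 : (b - a) * b ^ (-(p+1)) ≤ (1/p) * (a ^ (-p) - b ^ (-p)) := by
        have h := mul_le_mul_of_nonneg_left hcx (by positivity : (0:ℝ) ≤ 1/p)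
        have heq : (1/p) * (p * (b - a) * b ^ (-(p+1))) = (b - a) * b ^ (-(p+1)) := by
          field_simp
        linarith [h, heq]
      have h1 : (1/((s:ℝ)+1)) * b ^ (-(p+1)) ≤ (b - a) * b ^ (-(p+1)) := by
        apply mul_le_mul_of_nonneg_right _ hb0
        have heq : b - a = Real.log ((s:ℝ)+1) - Real.log s := by rw [hadef, hbdef]; ring
        rw [heq]; exact hgap1
      calc b ^ (-(p+1)) / ((s:ℝ)+1) = (1/((s:ℝ)+1)) * b ^ (-(p+1)) := by ring
        _ ≤ (b - a) * b ^ (-(p+1)) := h1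
        _ ≤ (1/p) * (a ^ (-p) - b ^ (-p)) := hcx2
    · -- N ≤ s
      have hlsN : Real.log N ≤ Real.log s := Real.log_le_log hN0 (by exact_mod_cast hsN)
      have hls'N : Real.log N ≤ Real.log ((s:ℝ)+1) := le_trans hlsN hls
      have habs : |Real.log ((s:ℝ)/N)| = Real.log s - Real.log N := by
        rw [hlogdiv, _root_.abs_of_nonneg (by linarith)]
      set c := 1 + (Real.log s - Real.log N) with hcdef
      set d := 1 + (Real.log ((s:ℝ)+1) - Real.log N) with hddef
      have hc1 : 1 ≤ c := by rw [hcdef]; linarith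
      have hcd : c ≤ d := by rw [hcdef, hddef]; linarith
      have hd2c : d ≤ 2 * c := by
        have heq : d = c + (Real.log ((s:ℝ)+1) - Real.log s) := by rw [hcdef, hddef]; ring
        rw [heq]; linarith
      have hc0 : (0:ℝ) < c := by linarith
      have hd0 : (0:ℝ) < d := by linarith
      have hcx := aux_convex hc1 hcd hp0 hp1
      have hmono : (2*c) ^ (-(p+1)) ≤ d ^ (-(p+1)) :=
        Real.rpow_le_rpow_of_nonpos hd0 hd2c (by linarith)
      have h2c : (2*c) ^ (-(p+1)) = (2:ℝ) ^ (-(p+1)) * c ^ (-(p+1)) :=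
        Real.mul_rpow (by norm_num) hc0.le
      have h14 : (1/4 : ℝ) ≤ (2:ℝ) ^ (-(p+1)) := by
        have hm := Real.rpow_le_rpow_of_exponent_le (one_le_two) (by linarith : (-2:ℝ) ≤ -(p+1))
        have h4 : (2:ℝ) ^ (-2:ℝ) = 1/4 := by
          rw [show (-2:ℝ) = ((-2 : ℤ) : ℝ) by norm_num, Real.rpow_intCast]
          norm_num
        linarith [h4 ▸ hm]
      have hc0' : (0:ℝ) ≤ c ^ (-(p+1)) := Real.rpow_nonneg hc0.le _
      have hd0' : (0:ℝ) ≤ d ^ (-(p+1)) := Real.rpow_nonneg hd0.le _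
      have e1 : max (Real.log N - Real.log ((s:ℝ)+1)) 0 = 0 := max_eq_right (by linarith)
      have e2 : max (Real.log ((s:ℝ)+1) - Real.log N) 0 = Real.log ((s:ℝ)+1) - Real.log N :=
        max_eq_left (by linarith)
      have e3 : max (Real.log (s:ℝ) - Real.log N) 0 = Real.log (s:ℝ) - Real.log N :=
        max_eq_left (by linarith)
      have e4 : max (Real.log N - Real.log (s:ℝ)) 0 = 0 := max_eq_right (by linarith)
      have hHdiff : H (s+1) - H s = (4/p) * (c ^ (-p) - d ^ (-p)) := by
        simp only [hH, hcast, e1, e2, e3, e4, hcdef, hddef]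
        ring
      rw [habs, hHdiff]
      have hdc : 1/((s:ℝ)+1) ≤ d - c := by
        have heq : d - c = Real.log ((s:ℝ)+1) - Real.log s := by rw [hcdef, hddef]; ring
        rw [heq]; exact hgap1
      have h1 : (1/4 : ℝ) * c ^ (-(p+1)) ≤ d ^ (-(p+1)) := by
        calc (1/4 : ℝ) * c ^ (-(p+1)) ≤ (2:ℝ)^(-(p+1)) * c ^ (-(p+1)) :=
              mul_le_mul_of_nonneg_right h14 hc0'
          _ = (2*c) ^ (-(p+1)) := h2c.symm
          _ ≤ d ^ (-(p+1)) := hmono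
      have m1 : (1/((s:ℝ)+1)) * ((1/4) * c ^ (-(p+1))) ≤ (d - c) * d ^ (-(p+1)) :=
        mul_le_mul hdc h1 (by positivity) (le_trans (by positivity) hdc)
      have hstep : p * ((1/((s:ℝ)+1)) * ((1/4) * c ^ (-(p+1)))) ≤ c ^ (-p) - d ^ (-p) := by
        have h2 := mul_le_mul_of_nonneg_left m1 hp0.le
        have heq : p * ((d - c) * d ^ (-(p+1))) = p * (d - c) * d ^ (-(p+1)) := by ring
        exact le_trans (le_trans h2 (le_of_eq heq)) hcx
      have hfin := mul_le_mul_of_nonneg_left hstep (by positivity : (0:ℝ) ≤ 4/p)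
      have heq2 : (4/p) * (p * ((1/((s:ℝ)+1)) * ((1/4) * c ^ (-(p+1)))))
          = c ^ (-(p+1)) / ((s:ℝ)+1) := by
        field_simp
        try ring
      linarith [hfin, heq2]
  -- telescoping
  have htel : ∀ n : ℕ, 1 ≤ n → ∑ s ∈ Finset.Ico 1 n, (H (s+1) - H s) = H n - H 1 := by
    intro n hn
    induction n, hn using Nat.le_induction with
    | base => simp
    | succ n hn ih =>
        rw [Finset.sum_Ico_succ_top hn, ih]
        ring
  rcases Nat.lt_or_ge m 1 with hm | hm
  · have : m = 0 := by omega
    subst this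
    rw [Finset.Ico_eq_empty (by omega), Finset.sum_empty]
    positivity
  · have hsum : ∑ s ∈ Finset.Ico 1 m, ((1 + |Real.log ((s : ℝ) / N)|) ^ (-(p + 1)) / ((s : ℝ) + 1))
        ≤ ∑ s ∈ Finset.Ico 1 m, (H (s+1) - H s) :=
      Finset.sum_le_sum fun s hs => step s (Finset.mem_Ico.mp hs).1
    rw [htel m hm] at hsum
    have := hHub m
    have := hHlb 1
    calc ∑ s ∈ Finset.Ico 1 m, ((1 + |Real.log ((s : ℝ) / N)|) ^ (-(p + 1)) / ((s : ℝ) + 1))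
        ≤ H m - H 1 := hsum
      _ ≤ 1/p + 4/p := by linarith
      _ = 5/p := by ring

lemma rpow_sq {L e : ℝ} (hL : 0 ≤ L) : (L ^ e) ^ 2 = L ^ (2 * e) := by
  rw [← Real.rpow_natCast (L ^ e) 2, ← Real.rpow_mul hL]
  norm_num [mul_comm]

lemma abs_sq_le {z : ℂ} {c t : ℝ} (h : ‖z‖ ≤ c * t) :
    ‖z‖ ^ 2 ≤ (c * t) ^ 2 :=
  pow_le_pow_left₀ (norm_nonneg z) h 2

set_option maxHeartbeats 1000000 in
lemma sigma_sq_bound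
    (σ : ℝ → ℝ → ℂ) {a Ca : ℝ} (ha : 1/2 < a) (hCa : 0 < Ca)
    (hσC : ∀ x y : ℝ, 0 ≤ x → 0 ≤ y →
      ‖σ x y‖ ≤ Ca * Real.log (x + y + 2) ^ (-a))
    {ε b Cb : ℝ} (hε : 0 < ε) (hb : 1/2 < b) (hCb : 0 < Cb)
    (hσB : ∀ x y : ℝ, 0 ≤ x → x ≤ ε → 0 ≤ y → y ≤ ε →
      ‖σ x y‖ ≤ Cb * |Real.log (x + y)| ^ (-b))
    {N : ℕ} (hN : 1 ≤ N) {j k : ℕ} (hjk : 1 ≤ j + k) :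
    ‖σ ((j:ℝ)/N) ((k:ℝ)/N)‖ ^ 2
      ≤ (9/4 * Cb^2
          + Ca^2 * Real.log 2 ^ (-(2*a)) * (1 + -Real.log (min ε (Real.exp (-2))))^2
          + 4 * Ca^2)
        * (1 + |Real.log (((j+k:ℕ):ℝ)/N)|) ^ (-(2 * min a (min b 1))) := by
  set γ : ℝ := min a (min b 1) with hγdef
  have hγa : γ ≤ a := min_le_left _ _
  have hγb : γ ≤ b := le_trans (min_le_right _ _) (min_le_left _ _)
  have hγ1 : γ ≤ 1 := le_trans (min_le_right _ _) (min_le_right _ _)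
  have hγ0 : 0 < γ := by
    simp only [hγdef, lt_min_iff]
    refine ⟨by linarith, by linarith, by norm_num⟩
  set ε' : ℝ := min ε (Real.exp (-2)) with hε'def
  have hε'0 : 0 < ε' := lt_min hε (Real.exp_pos _)
  have hε'ε : ε' ≤ ε := min_le_left _ _
  have hlogε' : Real.log ε' ≤ -2 := by
    calc Real.log ε' ≤ Real.log (Real.exp (-2)) :=
          Real.log_le_log hε'0 (min_le_right _ _)
      _ = -2 := Real.log_exp _
  set E : ℝ := -Real.log ε' with hEdef
  have hE2 : 2 ≤ E := by simp only [hEdef]; linarith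
  have hN0 : (0:ℝ) < N := by exact_mod_cast hN
  set u : ℝ := ((j+k:ℕ):ℝ)/N with hudef
  have hu0 : 0 < u := by
    have : (1:ℝ) ≤ ((j+k:ℕ):ℝ) := by exact_mod_cast hjk
    positivity
  have hxy : (j:ℝ)/N + (k:ℝ)/N = u := by rw [hudef]; push_cast; ring
  have hx0 : (0:ℝ) ≤ (j:ℝ)/N := by positivity
  have hy0 : (0:ℝ) ≤ (k:ℝ)/N := by positivity
  set L : ℝ := |Real.log u| with hLdef
  have hL0 : 0 ≤ L := abs_nonneg _
  set P : ℝ := (1 + L) ^ (-(2*γ)) with hPdef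
  have h1L0 : (0:ℝ) < 1 + L := by linarith
  have hP0 : 0 ≤ P := Real.rpow_nonneg h1L0.le _
  have hKparts : 0 ≤ Ca^2 * Real.log 2 ^ (-(2*a)) * (1 + E)^2 ∧ 0 ≤ 9/4 * Cb^2 ∧ 0 ≤ 4 * Ca^2 := by
    refine ⟨?_, by positivity, by positivity⟩
    have : (0:ℝ) ≤ Real.log 2 ^ (-(2*a)) := Real.rpow_nonneg (Real.log_nonneg one_le_two) _
    positivity
  obtain ⟨hK1, hK2, hK3⟩ := hKparts
  clear_value γ ε' E u L P
  rcases le_or_gt u ε' with hcase | hcase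
  · -- small case
    have hxε : (j:ℝ)/N ≤ ε := by nlinarith [hxy, hy0]
    have hyε : (k:ℝ)/N ≤ ε := by nlinarith [hxy, hx0]
    have hlogu : Real.log u ≤ -2 :=
      le_trans (Real.log_le_log hu0 hcase) hlogε'
    have hL2 : 2 ≤ L := by
      rw [hLdef, _root_.abs_of_nonpos (by linarith)]; linarith
    have habs : ‖σ ((j:ℝ)/N) ((k:ℝ)/N)‖ ≤ Cb * L ^ (-b) := by
      have := hσB _ _ hx0 hxε hy0 hyε
      rwa [hxy, ← hLdef] at this
    have hsq : ‖σ ((j:ℝ)/N) ((k:ℝ)/N)‖ ^ 2 ≤ Cb^2 * L ^ (-(2*b)) := by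
      have h := abs_sq_le habs
      rw [mul_pow, rpow_sq hL0] at h
      have : 2 * -b = -(2*b) := by ring
      rwa [this] at h
    have hstep1 : L ^ (-(2*b)) ≤ L ^ (-(2*γ)) :=
      Real.rpow_le_rpow_of_exponent_le (by linarith) (by linarith)
    have hstep2 : L ^ (-(2*γ)) ≤ 9/4 * P := by
      have hbl : 1 + L ≤ (3/2) * L := by linarith
      have h1 : ((3/2) * L) ^ (-(2*γ)) ≤ P := by
        rw [hPdef]; exact Real.rpow_le_rpow_of_nonpos h1L0 hbl (by linarith)
      have h2 : ((3/2) * L) ^ (-(2*γ)) = (3/2:ℝ) ^ (-(2*γ)) * L ^ (-(2*γ)) :=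
        Real.mul_rpow (by norm_num) hL0
      have h3 : (3/2:ℝ) ^ (2*γ) * (3/2:ℝ) ^ (-(2*γ)) = 1 := by
        rw [← Real.rpow_add (by norm_num)]; norm_num
      have h4 : (3/2:ℝ) ^ (2*γ) ≤ 9/4 := by
        have := Real.rpow_le_rpow_of_exponent_le (by norm_num : (1:ℝ) ≤ 3/2)
          (by linarith : 2*γ ≤ 2)
        have he : (3/2:ℝ) ^ (2:ℝ) = 9/4 := by
          rw [show (2:ℝ) = ((2:ℕ):ℝ) by norm_num, Real.rpow_natCast]; norm_num
        linarith [he ▸ this]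
      have h5 : (0:ℝ) < (3/2:ℝ) ^ (2*γ) := Real.rpow_pos_of_pos (by norm_num) _
      calc L ^ (-(2*γ)) = (3/2:ℝ) ^ (2*γ) * ((3/2:ℝ) ^ (-(2*γ)) * L ^ (-(2*γ))) := by
            rw [← mul_assoc, h3, one_mul]
        _ = (3/2:ℝ) ^ (2*γ) * ((3/2) * L) ^ (-(2*γ)) := by rw [h2]
        _ ≤ (3/2:ℝ) ^ (2*γ) * P := by
            exact mul_le_mul_of_nonneg_left h1 h5.le
        _ ≤ 9/4 * P := mul_le_mul_of_nonneg_right h4 hP0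
    calc ‖σ ((j:ℝ)/N) ((k:ℝ)/N)‖ ^ 2 ≤ Cb^2 * L ^ (-(2*b)) := hsq
      _ ≤ Cb^2 * L ^ (-(2*γ)) := mul_le_mul_of_nonneg_left hstep1 (by positivity)
      _ ≤ Cb^2 * (9/4 * P) := mul_le_mul_of_nonneg_left hstep2 (by positivity)
      _ = (9/4 * Cb^2) * P := by ring
      _ ≤ (9/4 * Cb^2 + Ca^2 * Real.log 2 ^ (-(2*a)) * (1+E)^2 + 4 * Ca^2) * P :=
          mul_le_mul_of_nonneg_right (by linarith) hP0
  · -- u > ε'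
    have hlog2pos : (0:ℝ) < Real.log 2 := Real.log_pos one_lt_two
    have habsC : ‖σ ((j:ℝ)/N) ((k:ℝ)/N)‖ ≤ Ca * Real.log (u + 2) ^ (-a) := by
      have := hσC _ _ hx0 hy0
      rwa [hxy] at this
    have hlogu2 : Real.log 2 ≤ Real.log (u + 2) :=
      Real.log_le_log (by norm_num) (by linarith)
    rcases le_or_gt u 1 with hu1 | hu1
    · -- middle case
      have hlogu0 : Real.log u ≤ 0 := Real.log_nonpos hu0.le hu1
      have hLE : L ≤ E := by
        rw [hLdef, _root_.abs_of_nonpos hlogu0, hEdef]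
        have : Real.log ε' ≤ Real.log u := Real.log_le_log hε'0 hcase.le
        linarith
      have habs2 : ‖σ ((j:ℝ)/N) ((k:ℝ)/N)‖ ≤ Ca * Real.log 2 ^ (-a) := by
        refine le_trans habsC (mul_le_mul_of_nonneg_left ?_ hCa.le)
        exact Real.rpow_le_rpow_of_nonpos hlog2pos hlogu2 (by linarith)
      have hsq : ‖σ ((j:ℝ)/N) ((k:ℝ)/N)‖ ^ 2 ≤ Ca^2 * Real.log 2 ^ (-(2*a)) := by
        have h := abs_sq_le habs2
        rw [mul_pow, rpow_sq hlog2pos.le] at h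
        have : 2 * -a = -(2*a) := by ring
        rwa [this] at h
      have h1E0 : (0:ℝ) < 1 + E := by linarith
      have hinv : (1 + E) ^ (-(2:ℝ)) ≤ P := by
        calc (1 + E) ^ (-(2:ℝ)) ≤ (1 + E) ^ (-(2*γ)) :=
              Real.rpow_le_rpow_of_exponent_le (by linarith) (by linarith)
          _ ≤ P := by
              rw [hPdef]
              exact Real.rpow_le_rpow_of_nonpos h1L0 (by linarith) (by linarith)
      have hid : (1 + E) ^ (-(2:ℝ)) = ((1 + E)^2)⁻¹ := by
        rw [Real.rpow_neg h1E0.le, show (2:ℝ) = ((2:ℕ):ℝ) by norm_num, Real.rpow_natCast]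
      have hmain : Ca^2 * Real.log 2 ^ (-(2*a))
          ≤ (Ca^2 * Real.log 2 ^ (-(2*a)) * (1+E)^2) * P := by
        have h0 : (0:ℝ) ≤ Ca^2 * Real.log 2 ^ (-(2*a)) * (1+E)^2 := hK1
        have h1 : ((1+E)^2)⁻¹ ≤ P := hid ▸ hinv
        calc Ca^2 * Real.log 2 ^ (-(2*a))
            = (Ca^2 * Real.log 2 ^ (-(2*a)) * (1+E)^2) * ((1+E)^2)⁻¹ := by field_simp
          _ ≤ (Ca^2 * Real.log 2 ^ (-(2*a)) * (1+E)^2) * P := mul_le_mul_of_nonneg_left h1 h0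
      calc ‖σ ((j:ℝ)/N) ((k:ℝ)/N)‖ ^ 2 ≤ Ca^2 * Real.log 2 ^ (-(2*a)) := hsq
        _ ≤ (Ca^2 * Real.log 2 ^ (-(2*a)) * (1+E)^2) * P := hmain
        _ ≤ (9/4 * Cb^2 + Ca^2 * Real.log 2 ^ (-(2*a)) * (1+E)^2 + 4 * Ca^2) * P :=
            mul_le_mul_of_nonneg_right (by linarith) hP0
    · -- large case
      have hlogu0 : 0 < Real.log u := Real.log_pos hu1
      have hLu : L = Real.log u := by rw [hLdef]; exact _root_.abs_of_pos hlogu0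
      have hlg1 : (1:ℝ) ≤ Real.log (u + 2) := by
        have h3 : Real.log 3 ≤ Real.log (u + 2) := Real.log_le_log (by norm_num) (by linarith)
        have : (1:ℝ) < Real.log 3 := by
          rw [Real.lt_log_iff_exp_lt (by norm_num)]
          have := Real.exp_one_lt_d9
          linarith
        linarith
      have hsq : ‖σ ((j:ℝ)/N) ((k:ℝ)/N)‖ ^ 2 ≤ Ca^2 * Real.log (u+2) ^ (-(2*a)) := by
        have h := abs_sq_le habsC
        rw [mul_pow, rpow_sq (by linarith : (0:ℝ) ≤ Real.log (u+2))] at h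
        have : 2 * -a = -(2*a) := by ring
        rwa [this] at h
      have hstep1 : Real.log (u+2) ^ (-(2*a)) ≤ Real.log (u+2) ^ (-(2*γ)) :=
        Real.rpow_le_rpow_of_exponent_le hlg1 (by linarith)
      have hstep2 : Real.log (u+2) ^ (-(2*γ)) ≤ 4 * P := by
        have hul : Real.log u ≤ Real.log (u + 2) := Real.log_le_log hu0 (by linarith)
        have hbl : 1 + L ≤ 2 * Real.log (u+2) := by rw [hLu]; linarith
        have h1 : (2 * Real.log (u+2)) ^ (-(2*γ)) ≤ P := by
          rw [hPdef]; exact Real.rpow_le_rpow_of_nonpos h1L0 hbl (by linarith)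
        have h2 : (2 * Real.log (u+2)) ^ (-(2*γ))
            = (2:ℝ) ^ (-(2*γ)) * Real.log (u+2) ^ (-(2*γ)) :=
          Real.mul_rpow (by norm_num) (by linarith)
        have h3 : (2:ℝ) ^ (2*γ) * (2:ℝ) ^ (-(2*γ)) = 1 := by
          rw [← Real.rpow_add (by norm_num)]; norm_num
        have h4 : (2:ℝ) ^ (2*γ) ≤ 4 := by
          have := Real.rpow_le_rpow_of_exponent_le (one_le_two) (by linarith : 2*γ ≤ 2)
          have he : (2:ℝ) ^ (2:ℝ) = 4 := by
            rw [show (2:ℝ) = ((2:ℕ):ℝ) by norm_num, Real.rpow_natCast]; norm_num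
          linarith [he ▸ this]
        have h5 : (0:ℝ) < (2:ℝ) ^ (2*γ) := Real.rpow_pos_of_pos (by norm_num) _
        calc Real.log (u+2) ^ (-(2*γ))
            = (2:ℝ) ^ (2*γ) * ((2:ℝ) ^ (-(2*γ)) * Real.log (u+2) ^ (-(2*γ))) := by
              rw [← mul_assoc, h3, one_mul]
          _ = (2:ℝ) ^ (2*γ) * (2 * Real.log (u+2)) ^ (-(2*γ)) := by rw [h2]
          _ ≤ (2:ℝ) ^ (2*γ) * P := mul_le_mul_of_nonneg_left h1 h5.le
          _ ≤ 4 * P := mul_le_mul_of_nonneg_right h4 hP0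
      calc ‖σ ((j:ℝ)/N) ((k:ℝ)/N)‖ ^ 2 ≤ Ca^2 * Real.log (u+2) ^ (-(2*a)) := hsq
        _ ≤ Ca^2 * Real.log (u+2) ^ (-(2*γ)) := mul_le_mul_of_nonneg_left hstep1 (by positivity)
        _ ≤ Ca^2 * (4 * P) := mul_le_mul_of_nonneg_left hstep2 (by positivity)
        _ = (4 * Ca^2) * P := by ring
        _ ≤ (9/4 * Cb^2 + Ca^2 * Real.log 2 ^ (-(2*a)) * (1+E)^2 + 4 * Ca^2) * P :=
            mul_le_mul_of_nonneg_right (by linarith) hP0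


lemma box_sum_bound {g : ℕ → ℝ} (hg0 : ∀ s, 0 ≤ g s) (n : ℕ) :
    ∑ q ∈ Finset.range n ×ˢ Finset.range n, g (q.1 + q.2)
      ≤ ∑ s ∈ Finset.range (2*n), ((s:ℝ)+1) * g s := by
  have hdisj : Set.PairwiseDisjoint (↑(Finset.range (2*n)) : Set ℕ)
      (Finset.HasAntidiagonal.antidiagonal : ℕ → Finset (ℕ × ℕ)) := by
    intro x _ y _ hxy
    simp only [Function.onFun, Finset.disjoint_left, Finset.HasAntidiagonal.mem_antidiagonal]
    intro q h1 h2
    exact hxy (by omega)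
  have hsub : Finset.range n ×ˢ Finset.range n
      ⊆ (Finset.range (2*n)).biUnion Finset.HasAntidiagonal.antidiagonal := by
    intro q hq
    simp only [Finset.mem_product, Finset.mem_range] at hq
    simp only [Finset.mem_biUnion, Finset.mem_range, Finset.HasAntidiagonal.mem_antidiagonal]
    exact ⟨q.1 + q.2, by omega, rfl⟩
  calc ∑ q ∈ Finset.range n ×ˢ Finset.range n, g (q.1 + q.2)
      ≤ ∑ q ∈ (Finset.range (2*n)).biUnion Finset.HasAntidiagonal.antidiagonal, g (q.1 + q.2) :=
        Finset.sum_le_sum_of_subset_of_nonneg hsub (fun q _ _ => hg0 _)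
    _ = ∑ s ∈ Finset.range (2*n), ∑ q ∈ Finset.HasAntidiagonal.antidiagonal s, g (q.1 + q.2) :=
        Finset.sum_biUnion hdisj
    _ = ∑ s ∈ Finset.range (2*n), ((s:ℝ)+1) * g s := by
        apply Finset.sum_congr rfl
        intro s _
        have h1 : ∀ q ∈ Finset.HasAntidiagonal.antidiagonal s, g (q.1 + q.2) = g s := by
          intro q hq
          rw [Finset.HasAntidiagonal.mem_antidiagonal.mp hq]
        rw [Finset.sum_congr rfl h1, Finset.sum_const, Finset.Nat.card_antidiagonal,
          nsmul_eq_mul]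
        push_cast
        ring

/-- if `σ` satisfies (C), vanishes at the origin with a logarithmic rate
`|σ(x,y)| ≤ C|log(x+y)|^{-β}`, `β > 1/2`, near the origin, then for `A ∈ ℬ₀` the Schur
products `σ_N ⋆ A` are Hilbert–Schmidt with uniformly bounded Hilbert–Schmidt norm. -/
theorem uniform_hilbert_schmidt_bound
    (σ : ℝ → ℝ → ℂ) (hC : AssumptionC σ) (h00 : σ 0 0 = 0)
    (hB : ∃ ε > (0 : ℝ), ∃ β > (1 / 2 : ℝ), ∃ C > (0 : ℝ), ∀ x y : ℝ,
      0 ≤ x → x ≤ ε → 0 ≤ y → y ≤ ε →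
        ‖σ x y‖ ≤ C * |Real.log (x + y)| ^ (-β))
    (A : OpH) (hA : MemB0 A) :
    ∃ C : ℝ, ∀ N : ℕ, 1 ≤ N →
      (∃ B : OpH, IsSchurMul (scaleT σ N) A B) ∧
      ∀ B : OpH, IsSchurMul (scaleT σ N) A B →
        Summable (fun q : ℕ × ℕ => ‖entry B q.1 q.2‖ ^ 2) ∧
        Real.sqrt (∑' q : ℕ × ℕ, ‖entry B q.1 q.2‖ ^ 2) ≤ C := by
  obtain ⟨a, ha, Ca, hCa, hσC⟩ := hC
  obtain ⟨ε, hε, b, hb, Cb, hCb, hσB⟩ := hB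
  obtain ⟨M, hM⟩ := hA
  have hM0 : 0 ≤ M := le_trans (by positivity) (hM 0 0)
  set γ : ℝ := min a (min b 1) with hγdef
  have hγh : 1/2 < γ := by
    simp only [hγdef, lt_min_iff]
    refine ⟨by linarith, by linarith, by norm_num⟩
  have hγ1 : γ ≤ 1 := le_trans (min_le_right _ _) (min_le_right _ _)
  set p : ℝ := 2 * γ - 1 with hpdef
  have hp0 : 0 < p := by simp only [hpdef]; linarith
  have hp1 : p ≤ 1 := by simp only [hpdef]; linarith
  have hexp : -(p + 1) = -(2 * γ) := by simp only [hpdef]; ring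
  set K : ℝ := 9/4 * Cb^2
      + Ca^2 * Real.log 2 ^ (-(2*a)) * (1 + -Real.log (min ε (Real.exp (-2))))^2
      + 4 * Ca^2 with hKdef
  have hK0 : 0 ≤ K := by
    have h1 : (0:ℝ) ≤ Real.log 2 ^ (-(2*a)) := Real.rpow_nonneg (Real.log_nonneg one_le_two) _
    have h2 : (0:ℝ) ≤ Ca^2 * Real.log 2 ^ (-(2*a))
        * (1 + -Real.log (min ε (Real.exp (-2))))^2 := by positivity
    simp only [hKdef]
    positivity
  set c : ℝ := K * M^2 * (5/p) with hcdef
  have hc0 : 0 ≤ c := by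
    have : (0:ℝ) ≤ 5/p := by positivity
    simp only [hcdef]; positivity
  refine ⟨Real.sqrt c, fun N hN => ?_⟩
  have hN0 : (0:ℝ) < N := by exact_mod_cast hN
  set bf : ℕ → ℕ → ℂ := fun j k => σ ((j:ℝ)/N) ((k:ℝ)/N) * entry A j k with hbfdef
  -- the central finite-sum estimate
  have key : ∀ u : Finset (ℕ × ℕ), ∑ q ∈ u, ‖bf q.1 q.2‖ ^ 2 ≤ c := by
    intro u
    set n : ℕ := (u.sup fun q => max q.1 q.2) + 1 with hndef
    have hsub : u ⊆ Finset.range n ×ˢ Finset.range n := by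
      intro q hq
      have h1 : (fun q : ℕ × ℕ => max q.1 q.2) q ≤ u.sup (fun q => max q.1 q.2) :=
        Finset.le_sup (f := fun q : ℕ × ℕ => max q.1 q.2) hq
      simp only [Finset.mem_product, Finset.mem_range, hndef]
      simp only at h1
      omega
    set g : ℕ → ℝ := fun s =>
      if s = 0 then 0
      else K * (1 + |Real.log ((s:ℝ)/N)|) ^ (-(p+1)) * (M^2 / ((s:ℝ)+1)^2) with hgdef
    have hg0 : ∀ s, 0 ≤ g s := by
      intro s
      simp only [hgdef]
      split
      · exact le_refl 0
      · have h1 : (0:ℝ) ≤ (1 + |Real.log ((s:ℝ)/N)|) ^ (-(p+1)) :=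
          Real.rpow_nonneg (by positivity) _
        have h2 : (0:ℝ) ≤ M^2 / ((s:ℝ)+1)^2 := by positivity
        positivity
    have hentry : ∀ j k : ℕ, ‖bf j k‖ ^ 2 ≤ g (j + k) := by
      intro j k
      rcases Nat.eq_zero_or_pos (j + k) with hjk | hjk
      · have hj : j = 0 := by omega
        have hk : k = 0 := by omega
        subst hj; subst hk
        have hb0 : bf 0 0 = 0 := by
          simp only [hbfdef, Nat.cast_zero, zero_div, h00, zero_mul]
        rw [hb0]
        simp [hgdef]
      · have hσ2 := sigma_sq_bound σ ha hCa hσC hε hb hCb hσB hN hjk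
        rw [← hγdef, ← hexp, ← hKdef] at hσ2
        have hs0 : (0:ℝ) < ((j+k:ℕ):ℝ) + 1 := by positivity
        have habsA : ‖entry A j k‖ ≤ M / (((j+k:ℕ):ℝ) + 1) := by
          rw [le_div_iff₀ hs0]
          have hcast : ((j+k:ℕ):ℝ) + 1 = (j:ℝ) + k + 1 := by push_cast; ring
          rw [hcast, mul_comm]
          exact hM j k
        have hA2 : ‖entry A j k‖ ^ 2 ≤ M^2 / (((j+k:ℕ):ℝ) + 1)^2 := by
          have h := pow_le_pow_left₀ (norm_nonneg _) habsA 2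
          rwa [div_pow] at h
        have hgval : g (j + k)
            = K * (1 + |Real.log (((j+k:ℕ):ℝ)/N)|) ^ (-(p+1))
              * (M^2 / (((j+k:ℕ):ℝ)+1)^2) := by
          simp only [hgdef, if_neg (by omega : ¬ (j + k = 0))]
        have hbfabs : ‖bf j k‖ ^ 2
            = ‖σ ((j:ℝ)/N) ((k:ℝ)/N)‖ ^ 2 * ‖entry A j k‖ ^ 2 := by
          simp only [hbfdef, norm_mul, mul_pow]
        rw [hbfabs, hgval]
        apply mul_le_mul hσ2 hA2 (by positivity)
        have : (0:ℝ) ≤ (1 + |Real.log (((j+k:ℕ):ℝ)/N)|) ^ (-(p+1)) :=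
          Real.rpow_nonneg (by positivity) _
        positivity
    have hcore := core_sum hp0 hp1 hN (2*n)
    have hrange : ∑ s ∈ Finset.range (2*n), ((s:ℝ)+1) * g s ≤ c := by
      have h2n : 0 < 2*n := by simp only [hndef]; omega
      rw [Finset.range_eq_Ico, Finset.sum_eq_sum_Ico_succ_bot h2n]
      have hg00 : g 0 = 0 := by simp [hgdef]
      have hterm : ∀ s ∈ Finset.Ico 1 (2*n), ((s:ℝ)+1) * g s
          = (K * M^2) * ((1 + |Real.log ((s:ℝ)/N)|) ^ (-(p+1)) / ((s:ℝ)+1)) := by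
        intro s hs
        have hs1 : s ≠ 0 := by
          have := (Finset.mem_Ico.mp hs).1; omega
        have hsR : ((s:ℝ)+1) ≠ 0 := by positivity
        simp only [hgdef, if_neg hs1]
        field_simp
      rw [Finset.sum_congr rfl hterm, ← Finset.mul_sum]
      rw [Nat.cast_zero, hg00, mul_zero, zero_add]
      calc (K * M^2) * (∑ s ∈ Finset.Ico 1 (2*n),
              (1 + |Real.log ((s:ℝ)/N)|) ^ (-(p+1)) / ((s:ℝ)+1))
          ≤ (K * M^2) * (5/p) := by
            exact mul_le_mul_of_nonneg_left hcore (by positivity : (0:ℝ) ≤ K * M^2)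
        _ = c := by rw [hcdef]; try ring
    calc ∑ q ∈ u, ‖bf q.1 q.2‖ ^ 2
        ≤ ∑ q ∈ Finset.range n ×ˢ Finset.range n, ‖bf q.1 q.2‖ ^ 2 :=
          Finset.sum_le_sum_of_subset_of_nonneg hsub (fun q _ _ => by positivity)
      _ ≤ ∑ q ∈ Finset.range n ×ˢ Finset.range n, g (q.1 + q.2) :=
          Finset.sum_le_sum (fun q _ => hentry q.1 q.2)
      _ ≤ ∑ s ∈ Finset.range (2*n), ((s:ℝ)+1) * g s := box_sum_bound hg0 n
      _ ≤ c := hrange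
  have hnn : ∀ q : ℕ × ℕ, 0 ≤ ‖bf q.1 q.2‖ ^ 2 := fun q => by positivity
  have hsummable : Summable fun q : ℕ × ℕ => ‖bf q.1 q.2‖ ^ 2 :=
    summable_of_sum_le hnn key
  have htsum : ∑' q : ℕ × ℕ, ‖bf q.1 q.2‖ ^ 2 ≤ c :=
    Summable.tsum_le_of_sum_le hsummable key
  -- construction of the operator B
  have twoTo : (2:ENNReal).toReal = 2 := by norm_num
  have hpow2 : ∀ x : ℝ, x ^ (2:ENNReal).toReal = x^2 := fun x => by
    rw [twoTo, show (2:ℝ) = ((2:ℕ):ℝ) by norm_num, Real.rpow_natCast]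
  have hptoReal : 0 < (2:ENNReal).toReal := by rw [twoTo]; norm_num
  have hrowmem : ∀ j : ℕ, Memℓp (fun k => (starRingEnd ℂ) (bf j k)) 2 := by
    intro j
    apply memℓp_gen
    refine (hsummable.prod_factor j).congr fun k => ?_
    rw [hpow2]
    rw [Complex.norm_conj]
  set r : ℕ → Hl2 := fun j => ⟨fun k => (starRingEnd ℂ) (bf j k), hrowmem j⟩ with hrdef
  have hrapp : ∀ j k, (r j : ∀ _ : ℕ, ℂ) k = (starRingEnd ℂ) (bf j k) := fun j k => rfl
  set S : ℕ → ℝ := fun j => ∑' k, ‖bf j k‖^2 with hSdef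
  have hs_fib : ∀ j, Summable fun k => ‖bf j k‖^2 :=
    fun j => hsummable.prod_factor j
  have hSsum : Summable S := ((summable_prod_of_nonneg hnn).mp hsummable).2
  have hStotal : ∑' j, S j ≤ c := by
    have h := Summable.tsum_prod' hsummable hs_fib
    simp only [hSdef]
    rw [← h]
    exact htsum
  have hrnorm : ∀ j, ‖r j‖^2 = S j := by
    intro j
    rw [← hpow2, lp.norm_rpow_eq_tsum hptoReal (r j)]
    simp only [hSdef]
    apply tsum_congr
    intro k
    rw [hpow2, Complex.norm_conj]
  have hCS : ∀ (x : Hl2) (j : ℕ), ‖(inner ℂ (r j) x : ℂ)‖^2 ≤ S j * ‖x‖^2 := by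
    intro x j
    have h := norm_inner_le_norm (𝕜 := ℂ) (r j) x
    have h2 := pow_le_pow_left₀ (norm_nonneg _) h 2
    rwa [mul_pow, hrnorm] at h2
  have hsumin : ∀ x : Hl2, Summable fun j => ‖(inner ℂ (r j) x : ℂ)‖^2 := by
    intro x
    exact Summable.of_nonneg_of_le (fun j => by positivity) (fun j => hCS x j)
      (hSsum.mul_right (‖x‖^2))
  have hmemT : ∀ x : Hl2, Memℓp (fun j => (inner ℂ (r j) x : ℂ)) 2 := by
    intro x
    apply memℓp_gen
    refine (hsumin x).congr fun j => ?_
    rw [hpow2]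
  set Tlin : Hl2 →ₗ[ℂ] Hl2 :=
    { toFun := fun x => ⟨fun j => (inner ℂ (r j) x : ℂ), hmemT x⟩
      map_add' := fun x y => by
        ext j
        exact inner_add_right (r j) x y
      map_smul' := fun m x => by
        ext j
        exact inner_smul_right (r j) x m } with hTdef
  have hTapp : ∀ (x : Hl2) (j : ℕ), (Tlin x : ∀ _ : ℕ, ℂ) j = (inner ℂ (r j) x : ℂ) :=
    fun x j => rfl
  have hbound : ∀ x : Hl2, ‖Tlin x‖ ≤ Real.sqrt c * ‖x‖ := by
    intro x
    have h1 : ‖Tlin x‖^2 = ∑' j, ‖(inner ℂ (r j) x : ℂ)‖^2 := by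
      rw [← hpow2, lp.norm_rpow_eq_tsum hptoReal (Tlin x)]
      apply tsum_congr
      intro j
      rw [hpow2, hTapp]
    have h2 : ∑' j, ‖(inner ℂ (r j) x : ℂ)‖^2 ≤ ∑' j, S j * ‖x‖^2 :=
      Summable.tsum_le_tsum (fun j => hCS x j) (hsumin x) (hSsum.mul_right _)
    have h3 : ∑' j, S j * ‖x‖^2 = (∑' j, S j) * ‖x‖^2 := tsum_mul_right
    have h4 : ‖Tlin x‖^2 ≤ c * ‖x‖^2 := by
      rw [h1]
      calc ∑' j, ‖(inner ℂ (r j) x : ℂ)‖^2 ≤ (∑' j, S j) * ‖x‖^2 := by rw [← h3]; exact h2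
        _ ≤ c * ‖x‖^2 := mul_le_mul_of_nonneg_right hStotal (by positivity)
    calc ‖Tlin x‖ = Real.sqrt (‖Tlin x‖^2) := (Real.sqrt_sq (norm_nonneg _)).symm
      _ ≤ Real.sqrt (c * ‖x‖^2) := Real.sqrt_le_sqrt h4
      _ = Real.sqrt c * ‖x‖ := by
          rw [Real.sqrt_mul hc0, Real.sqrt_sq (norm_nonneg _)]
  set Bop : OpH := LinearMap.mkContinuous Tlin (Real.sqrt c) hbound with hBopdef
  have hBapp : ∀ x : Hl2, Bop x = Tlin x := fun x => rfl
  have hentryB : ∀ j k : ℕ, entry Bop j k = bf j k := by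
    intro j k
    simp only [entry]
    rw [hBapp, lp.inner_single_left]
    rw [RCLike.inner_apply', map_one, one_mul]
    rw [hTapp, lp.inner_single_right]
    rw [RCLike.inner_apply', hrapp, Complex.conj_conj, mul_one]
  have hSchur : IsSchurMul (scaleT σ N) A Bop := by
    intro j k
    rw [hentryB]
    simp only [hbfdef, scaleT]
  refine ⟨⟨Bop, hSchur⟩, fun B hB' => ?_⟩
  have hfun : (fun q : ℕ × ℕ => ‖entry B q.1 q.2‖ ^ 2)
      = fun q : ℕ × ℕ => ‖bf q.1 q.2‖ ^ 2 := by
    funext q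
    rw [hB' q.1 q.2]
    simp only [hbfdef, scaleT]
  constructor
  · rw [hfun]; exact hsummable
  · rw [hfun]
    calc Real.sqrt (∑' q : ℕ × ℕ, ‖bf q.1 q.2‖ ^ 2)
        ≤ Real.sqrt c := Real.sqrt_le_sqrt htsum
end
end
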